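/- arXiv:1805.06178 — 4 statements merged into one kernel-verified Lean document; each statement's English description precedes it below -/
import Mathlib

section
/- For all but countably many φ in (0, π), lim_{n→∞} (1/n) Σ_{t=1}^n cos(φ t²) = 0 and lim_{n→∞} (1/n) Σ_{t=1}^n sin(φ t²) = 0. -/
open Filter Finset

noncomputable def e (x : ℝ) : ℂ := Complex.exp (x * Complex.I)

lemma e_norm (x : ℝ) : ‖e x‖ = 1 := by
  simp [e, Complex.norm_exp_ofReal_mul_I]

lemma e_ne_zero (x : ℝ) : e x ≠ 0 := Complex.exp_ne_zero _

lemma e_add (x y : ℝ) : e (x + y) = e x * e y := by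
  simp [e, ← Complex.exp_add]; ring_nf

lemma e_conj (x : ℝ) : (starRingEnd ℂ) (e x) = e (-x) := by
  rw [e, ← Complex.exp_conj]
  simp [e]

lemma e_zpow (x : ℝ) (t : ℤ) : e x ^ t = e (t * x) := by
  rw [e, e, ← Complex.exp_int_mul]
  push_cast
  ring_nf

lemma e_re (x : ℝ) : (e x).re = Real.cos x := Complex.exp_ofReal_mul_I_re x

lemma e_im (x : ℝ) : (e x).im = Real.sin x := by
  simp [e, Complex.exp_ofReal_mul_I_im]

lemma geom_key (z : ℂ) (hz : z ≠ 0) (a : ℤ) (m : ℕ) :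
    (z - 1) * ∑ t ∈ Finset.Icc a (a + m), z ^ t = z ^ (a + m + 1) - z ^ a := by
  induction m with
  | zero =>
    simp only [Nat.cast_zero, add_zero, Finset.Icc_self, Finset.sum_singleton]
    rw [zpow_add_one₀ hz]
    ring
  | succ k ih =>
    have h1 : a + ((k : ℤ) + 1) = (a + k) + 1 := by ring
    have h2 : Finset.Icc a (a + k + 1) = insert (a + k + 1) (Finset.Icc a (a + k)) := by
      ext x; simp only [Finset.mem_Icc, Finset.mem_insert]; omega
    push_cast
    rw [h1, h2, Finset.sum_insert (by simp), mul_add, ih]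
    rw [zpow_add_one₀ hz (a + k + 1)]
    ring

lemma geom_Icc (z : ℂ) (hz : ‖z‖ = 1) (h1 : z ≠ 1) (a b : ℤ) :
    ‖∑ t ∈ Finset.Icc a b, z ^ t‖ ≤ 2 / ‖1 - z‖ := by
  have hz0 : z ≠ 0 := by intro h; rw [h] at hz; simp at hz
  have hd : 0 < ‖1 - z‖ := by
    rw [norm_pos_iff, sub_ne_zero]; exact fun h => h1 h.symm
  rcases lt_or_ge b a with h | h
  · rw [Finset.Icc_eq_empty_of_lt h]
    simp only [Finset.sum_empty, norm_zero]
    positivity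
  · obtain ⟨m, hm⟩ : ∃ m : ℕ, b = a + m := ⟨(b - a).toNat, by omega⟩
    subst hm
    have key := geom_key z hz0 a m
    have hne : z - 1 ≠ 0 := sub_ne_zero.mpr h1
    have : ∑ t ∈ Finset.Icc a (a + m), z ^ t = (z ^ (a + m + 1) - z ^ a) / (z - 1) := by
      field_simp at key ⊢
      linear_combination key
    rw [this, norm_div]
    have hnum : ‖z ^ (a + (m:ℤ) + 1) - z ^ a‖ ≤ 2 := by
      calc ‖z ^ (a + (m:ℤ) + 1) - z ^ a‖ ≤ ‖z ^ (a + (m:ℤ) + 1)‖ + ‖z ^ a‖ := norm_sub_le _ _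
        _ = 2 := by rw [norm_zpow, norm_zpow, hz]; norm_num
    have hswap : ‖z - 1‖ = ‖1 - z‖ := by rw [← norm_neg]; ring_nf
    rw [hswap]
    gcongr

lemma shift_sum {M : Type*} [AddCommMonoid M] (n H : ℕ) (F : ℤ → M)
    (hF : ∀ s : ℤ, s ∉ Finset.Icc (1:ℤ) (n:ℤ) → F s = 0) (h : ℤ) (h0 : 0 ≤ h) (hh : h < H) :
    ∑ t ∈ Finset.Icc (2 - (H:ℤ)) (n:ℤ), F (t + h) = ∑ s ∈ Finset.Icc (1:ℤ) (n:ℤ), F s := by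
  have step1 : ∑ t ∈ Finset.Icc (2 - (H:ℤ)) (n:ℤ), F (t + h)
      = ∑ s ∈ Finset.Icc (h + (2 - (H:ℤ))) (h + (n:ℤ)), F s := by
    rw [← Finset.map_add_left_Icc, Finset.sum_map]
    refine Finset.sum_congr rfl fun t _ => ?_
    simp [addLeftEmbedding, add_comm]
  rw [step1]
  refine (Finset.sum_subset (Finset.Icc_subset_Icc (by omega) (by omega)) ?_).symm
  intro s _ hs
  exact hF s hs

lemma vdc (φ : ℝ) (hφ : ∀ d : ℤ, d ≠ 0 → e (2 * φ * d) ≠ 1) (H : ℕ) (hH : 1 ≤ H) :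
    ∃ K : ℝ, 0 ≤ K ∧ ∀ n : ℕ,
      (H : ℝ) ^ 2 * ‖∑ s ∈ Finset.Icc (1:ℤ) (n:ℤ), e (φ * (s:ℝ) ^ 2)‖ ^ 2
        ≤ ((n : ℝ) + H) * ((H : ℝ) * n + K) := by
  classical
  set B : ℤ → ℝ := fun d => 2 / ‖1 - e (2 * φ * d)‖ with hB
  have hBnonneg : ∀ d, 0 ≤ B d := fun d => by positivity
  refine ⟨∑ h ∈ Finset.range H, ∑ h' ∈ Finset.range H,
      (if h = h' then 0 else B ((h : ℤ) - (h' : ℤ))), ?_, ?_⟩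
  · refine Finset.sum_nonneg fun h _ => Finset.sum_nonneg fun h' _ => ?_
    split
    · exact le_rfl
    · exact hBnonneg _
  intro n
  set f : ℤ → ℂ := fun s => if s ∈ Finset.Icc (1:ℤ) (n:ℤ) then e (φ * (s:ℝ)^2) else 0 with hf
  set S : ℂ := ∑ s ∈ Finset.Icc (1:ℤ) (n:ℤ), e (φ * (s:ℝ)^2) with hS
  set I : Finset ℤ := Finset.Icc (2 - (H:ℤ)) (n:ℤ) with hI
  have hf0 : ∀ s : ℤ, s ∉ Finset.Icc (1:ℤ) (n:ℤ) → f s = 0 := fun s hs => if_neg hs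
  have hfS : ∑ s ∈ Finset.Icc (1:ℤ) (n:ℤ), f s = S :=
    Finset.sum_congr rfl fun s hs => if_pos hs
  have hHS : ∑ t ∈ I, ∑ h ∈ Finset.range H, f (t + (h:ℤ)) = (H : ℂ) * S := by
    rw [Finset.sum_comm]
    have hcongr : ∀ h ∈ Finset.range H, ∑ t ∈ I, f (t + (h:ℤ)) = S := by
      intro h hh
      rw [hI, shift_sum n H f hf0 (h:ℤ) (by positivity)
        (by exact_mod_cast Finset.mem_range.mp hh)]
      exact hfS
    rw [Finset.sum_congr rfl hcongr, Finset.sum_const, Finset.card_range, nsmul_eq_mul]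
  have cardI : (I.card : ℝ) ≤ (n : ℝ) + H := by
    have : I.card ≤ n + H := by
      rw [hI, Int.card_Icc]
      omega
    calc (I.card : ℝ) ≤ ((n + H : ℕ) : ℝ) := by exact_mod_cast this
      _ = (n : ℝ) + H := by push_cast; ring
  have CS : (H:ℝ)^2 * ‖S‖^2
      ≤ (I.card : ℝ) * ∑ t ∈ I, ‖∑ h ∈ Finset.range H, f (t + (h:ℤ))‖^2 := by
    have h1 : (H:ℝ) * ‖S‖ = ‖∑ t ∈ I, ∑ h ∈ Finset.range H, f (t + (h:ℤ))‖ := by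
      rw [hHS, norm_mul, Complex.norm_natCast]
    have h2 : ‖∑ t ∈ I, ∑ h ∈ Finset.range H, f (t + (h:ℤ))‖
        ≤ ∑ t ∈ I, ‖∑ h ∈ Finset.range H, f (t + (h:ℤ))‖ := norm_sum_le _ _
    have h3 := Finset.sum_mul_sq_le_sq_mul_sq I (fun _ => (1:ℝ))
      (fun t => ‖∑ h ∈ Finset.range H, f (t + (h:ℤ))‖)
    simp only [one_mul, one_pow, Finset.sum_const, nsmul_eq_mul, mul_one] at h3
    calc (H:ℝ)^2 * ‖S‖^2 = ((H:ℝ) * ‖S‖)^2 := by ring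
      _ ≤ (∑ t ∈ I, ‖∑ h ∈ Finset.range H, f (t + (h:ℤ))‖)^2 := by
          rw [h1]; exact pow_le_pow_left₀ (norm_nonneg _) h2 2
      _ ≤ (I.card : ℝ) * ∑ t ∈ I, ‖∑ h ∈ Finset.range H, f (t + (h:ℤ))‖^2 := h3
  have diag : ∀ h : ℕ, h < H →
      ‖∑ t ∈ I, f (t + (h:ℤ)) * (starRingEnd ℂ) (f (t + (h:ℤ)))‖ ≤ (n:ℝ) := by
    intro h hh
    calc ‖∑ t ∈ I, f (t + (h:ℤ)) * (starRingEnd ℂ) (f (t + (h:ℤ)))‖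
        ≤ ∑ t ∈ I, ‖f (t + (h:ℤ)) * (starRingEnd ℂ) (f (t + (h:ℤ)))‖ := norm_sum_le _ _
      _ = ∑ t ∈ I, ‖f (t + (h:ℤ))‖^2 := by
          refine Finset.sum_congr rfl fun t _ => ?_
          rw [norm_mul, RCLike.norm_conj]; ring
      _ = ∑ s ∈ Finset.Icc (1:ℤ) (n:ℤ), ‖f s‖^2 := by
          rw [hI]
          exact shift_sum n H (fun s => ‖f s‖^2)
            (fun s hs => by simp [hf0 s hs]) (h:ℤ) (by positivity) (by exact_mod_cast hh)
      _ ≤ ∑ _s ∈ Finset.Icc (1:ℤ) (n:ℤ), (1:ℝ) := by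
          refine Finset.sum_le_sum fun s hs => ?_
          simp only [hf, if_pos hs, e_norm]; norm_num
      _ = ((Finset.Icc (1:ℤ) (n:ℤ)).card : ℝ) := by simp
      _ ≤ (n:ℝ) := by
          rw [Int.card_Icc]
          have : ((n:ℤ) + 1 - 1).toNat = n := by omega
          rw [this]
  have offdiag : ∀ h h' : ℕ, h < H → h' < H → h ≠ h' →
      ‖∑ t ∈ I, f (t + (h:ℤ)) * (starRingEnd ℂ) (f (t + (h':ℤ)))‖ ≤ B ((h:ℤ) - h') := by
    intro h h' hhH hh'H hne
    set d : ℤ := (h:ℤ) - h' with hd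
    have hd0 : d ≠ 0 := by omega
    set z : ℂ := e (2 * φ * (d:ℝ)) with hz
    have hz1 : z ≠ 1 := hφ d hd0
    have hznorm : ‖z‖ = 1 := e_norm _
    set c : ℂ := e (φ * (d:ℝ) * ((h:ℝ) + h')) with hc
    set J : Finset ℤ := Finset.Icc (1 - min (h:ℤ) h') ((n:ℤ) - max (h:ℤ) h') with hJ
    have hJI : J ⊆ I := by
      rw [hJ, hI]; exact Finset.Icc_subset_Icc (by omega) (by omega)
    have point : ∀ t : ℤ, f (t + (h:ℤ)) * (starRingEnd ℂ) (f (t + (h':ℤ)))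
        = if t ∈ J then c * z ^ t else 0 := by
      intro t
      by_cases ht : t ∈ J
      · have h1 : t + (h:ℤ) ∈ Finset.Icc (1:ℤ) (n:ℤ) := by
          rw [Finset.mem_Icc]; rw [hJ, Finset.mem_Icc] at ht; omega
        have h2 : t + (h':ℤ) ∈ Finset.Icc (1:ℤ) (n:ℤ) := by
          rw [Finset.mem_Icc]; rw [hJ, Finset.mem_Icc] at ht; omega
        rw [if_pos ht]
        simp only [hf, if_pos h1, if_pos h2]
        rw [e_conj, ← e_add, hc, hz, e_zpow, ← e_add]
        congr 1
        simp only [hd]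
        push_cast
        ring
      · rw [if_neg ht]
        rw [hJ, Finset.mem_Icc] at ht
        have hbad : (t + (h:ℤ)) ∉ Finset.Icc (1:ℤ) (n:ℤ) ∨
            (t + (h':ℤ)) ∉ Finset.Icc (1:ℤ) (n:ℤ) := by
          by_contra hcon
          push_neg at hcon
          rw [Finset.mem_Icc] at hcon
          obtain ⟨hc1, hc2⟩ := hcon
          rw [Finset.mem_Icc] at hc2
          omega
        rcases hbad with hbad | hbad
        · rw [hf0 _ hbad, zero_mul]
        · rw [hf0 _ hbad, map_zero, mul_zero]
    calc ‖∑ t ∈ I, f (t + (h:ℤ)) * (starRingEnd ℂ) (f (t + (h':ℤ)))‖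
        = ‖c * ∑ t ∈ J, z ^ t‖ := by
          rw [Finset.sum_congr rfl fun t _ => point t, Finset.sum_ite_mem,
            Finset.inter_eq_right.mpr hJI, Finset.mul_sum]
      _ ≤ 2 / ‖1 - z‖ := by
          rw [norm_mul, hc, e_norm, one_mul]
          exact geom_Icc z hznorm hz1 _ _
      _ = B d := rfl
  have expand : ∑ t ∈ I, ‖∑ h ∈ Finset.range H, f (t + (h:ℤ))‖^2
      ≤ (H:ℝ) * n + ∑ h ∈ Finset.range H, ∑ h' ∈ Finset.range H,
          (if h = h' then 0 else B ((h:ℤ) - (h':ℤ))) := by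
    have point2 : ∀ t : ℤ, (‖∑ h ∈ Finset.range H, f (t + (h:ℤ))‖^2 : ℝ)
        = (∑ h ∈ Finset.range H, ∑ h' ∈ Finset.range H,
            f (t + (h:ℤ)) * (starRingEnd ℂ) (f (t + (h':ℤ)))).re := by
      intro t
      rw [← Finset.sum_mul_sum, ← map_sum, Complex.mul_conj]
      simp [Complex.normSq_eq_norm_sq, ← Complex.ofReal_pow]
    calc ∑ t ∈ I, ‖∑ h ∈ Finset.range H, f (t + (h:ℤ))‖^2
        = ∑ h ∈ Finset.range H, ∑ h' ∈ Finset.range H,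
            (∑ t ∈ I, f (t + (h:ℤ)) * (starRingEnd ℂ) (f (t + (h':ℤ)))).re := by
          rw [Finset.sum_congr rfl fun t _ => point2 t, ← Complex.re_sum, Finset.sum_comm,
            Complex.re_sum]
          refine Finset.sum_congr rfl fun h _ => ?_
          rw [Finset.sum_comm, Complex.re_sum]
      _ ≤ ∑ h ∈ Finset.range H, ∑ h' ∈ Finset.range H,
            (if h = h' then (n:ℝ) else B ((h:ℤ) - (h':ℤ))) := by
          refine Finset.sum_le_sum fun h hh => Finset.sum_le_sum fun h' hh' => ?_
          have hre := Complex.re_le_norm (∑ t ∈ I, f (t + (h:ℤ)) * (starRingEnd ℂ) (f (t + (h':ℤ))))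
          split
          next heq =>
            subst heq
            exact hre.trans (diag h (Finset.mem_range.mp hh))
          next hne =>
            exact hre.trans (offdiag h h' (Finset.mem_range.mp hh) (Finset.mem_range.mp hh') hne)
      _ = (H:ℝ) * n + ∑ h ∈ Finset.range H, ∑ h' ∈ Finset.range H,
            (if h = h' then 0 else B ((h:ℤ) - (h':ℤ))) := by
          have split_ite : ∀ h h' : ℕ, (if h = h' then (n:ℝ) else B ((h:ℤ) - (h':ℤ)))
              = (if h = h' then (n:ℝ) else 0) + (if h = h' then 0 else B ((h:ℤ) - (h':ℤ))) := by
            intro h h'; split <;> simp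
          simp only [split_ite, Finset.sum_add_distrib]
          congr 1
          rw [Finset.sum_congr rfl fun h hh => Finset.sum_ite_eq (Finset.range H) h (fun _ => (n:ℝ))]
          rw [Finset.sum_congr rfl fun h hh => if_pos hh, Finset.sum_const, Finset.card_range,
            nsmul_eq_mul]
  calc (H:ℝ)^2 * ‖S‖^2
      ≤ (I.card : ℝ) * ∑ t ∈ I, ‖∑ h ∈ Finset.range H, f (t + (h:ℤ))‖^2 := CS
    _ ≤ ((n:ℝ) + H) * ((H:ℝ) * n + ∑ h ∈ Finset.range H, ∑ h' ∈ Finset.range H,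
          (if h = h' then 0 else B ((h:ℤ) - (h':ℤ)))) := by
        refine mul_le_mul cardI expand ?_ (by positivity)
        exact Finset.sum_nonneg fun t _ => sq_nonneg _

lemma nat_int_sum (F : ℤ → ℂ) (n : ℕ) :
    ∑ t ∈ Finset.Icc 1 n, F (t : ℤ) = ∑ s ∈ Finset.Icc (1:ℤ) (n:ℤ), F s := by
  induction n with
  | zero => simp
  | succ k ih =>
    rw [Finset.sum_Icc_succ_top (by omega), ih]
    have hins : Finset.Icc (1:ℤ) ((k:ℤ) + 1) = insert ((k:ℤ) + 1) (Finset.Icc (1:ℤ) (k:ℤ)) := by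
      ext x; simp only [Finset.mem_Icc, Finset.mem_insert]; omega
    push_cast
    rw [hins, Finset.sum_insert (by simp)]
    ring

theorem stmt3 :
    ∃ S : Set ℝ, S.Countable ∧
      ∀ φ ∈ Set.Ioo (0 : ℝ) Real.pi, φ ∉ S →
        Tendsto (fun n : ℕ => (1 / (n : ℝ)) * ∑ t ∈ Finset.Icc 1 n, Real.cos (φ * (t : ℝ) ^ 2))
          atTop (nhds 0) ∧
        Tendsto (fun n : ℕ => (1 / (n : ℝ)) * ∑ t ∈ Finset.Icc 1 n, Real.sin (φ * (t : ℝ) ^ 2))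
          atTop (nhds 0) := by
  refine ⟨Set.range (fun q : ℚ => (q : ℝ) * Real.pi), Set.countable_range _, ?_⟩
  intro φ hφIoo hφS
  -- non-resonance
  have hφ : ∀ d : ℤ, d ≠ 0 → e (2 * φ * d) ≠ 1 := by
    intro d hd0 hcon
    rw [e, Complex.exp_eq_one_iff] at hcon
    obtain ⟨k, hk⟩ := hcon
    have hk' : (2 * φ * d : ℝ) = k * (2 * Real.pi) := by
      have := hk
      rw [show ((k:ℂ) * (2 * (Real.pi:ℂ) * Complex.I)) = ((k * (2 * Real.pi) : ℝ) : ℂ) * Complex.I by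
        push_cast; ring] at this
      have := mul_right_cancel₀ Complex.I_ne_zero this
      exact_mod_cast this
    apply hφS
    refine ⟨(k : ℚ) / (d : ℚ), ?_⟩
    have hd : (d : ℝ) ≠ 0 := Int.cast_ne_zero.mpr hd0
    push_cast
    field_simp
    nlinarith [hk', Real.pi_pos]
  -- complex partial sums
  set Z : ℕ → ℂ := fun n => ∑ s ∈ Finset.Icc (1:ℤ) (n:ℤ), e (φ * (s:ℝ) ^ 2) with hZ
  have main : Tendsto (fun n : ℕ => ((1 / (n:ℝ) : ℝ) : ℂ) * Z n) atTop (nhds 0) := by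
    rw [NormedAddCommGroup.tendsto_nhds_zero]
    intro ε hε
    obtain ⟨H, hH1, hHbig⟩ : ∃ H : ℕ, 1 ≤ H ∧ 4 / (H:ℝ) < ε ^ 2 := by
      obtain ⟨H, hH⟩ := exists_nat_gt (4 / ε ^ 2)
      refine ⟨H + 1, by omega, ?_⟩
      have h4 : (4 : ℝ) / ε ^ 2 < ((H + 1 : ℕ) : ℝ) := by push_cast at hH ⊢; linarith
      have hpos : (0:ℝ) < ((H + 1 : ℕ) : ℝ) := by positivity
      rw [div_lt_iff₀ (by positivity)] at h4
      rw [div_lt_iff₀ hpos]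
      linarith [mul_comm (((H + 1 : ℕ) : ℝ)) (ε ^ 2)]
    obtain ⟨K, hK0, hKbound⟩ := vdc φ hφ H hH1
    obtain ⟨N, hN⟩ := exists_nat_gt (max (H : ℝ) K)
    filter_upwards [eventually_ge_atTop (max N 1)] with n hn
    have hn1 : 1 ≤ n := le_trans (le_max_right _ _) hn
    have hnN : (N : ℝ) ≤ n := by exact_mod_cast le_trans (le_max_left _ _) hn
    have hnH : (H : ℝ) ≤ n := le_trans (le_trans (le_max_left _ _) hN.le) hnN
    have hnK : K ≤ (n : ℝ) := le_trans (le_trans (le_max_right _ _) hN.le) hnN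
    have hnpos : (0 : ℝ) < n := by exact_mod_cast hn1
    have hbound := hKbound n
    have hsq : ‖Z n‖ ^ 2 < (ε * n) ^ 2 := by
      have hH2 : (0:ℝ) < (H:ℝ) ^ 2 := by positivity
      have h1 : ((n:ℝ) + H) * ((H:ℝ) * n + K) ≤ (2 * n) * (2 * (H:ℝ) * n) := by
        have e1 : (n:ℝ) + H ≤ 2 * n := by linarith
        have hHr : (1:ℝ) ≤ (H:ℝ) := by exact_mod_cast hH1
        have e2 : (H:ℝ) * n + K ≤ 2 * (H:ℝ) * n := by nlinarith
        have e3 : (0:ℝ) ≤ (H:ℝ) * n + K := by positivity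
        nlinarith
      have h2 : (H:ℝ) ^ 2 * ‖Z n‖ ^ 2 ≤ 4 * (H:ℝ) * n ^ 2 := by
        calc (H:ℝ) ^ 2 * ‖Z n‖ ^ 2 ≤ ((n:ℝ) + H) * ((H:ℝ) * n + K) := hbound
          _ ≤ (2 * n) * (2 * (H:ℝ) * n) := h1
          _ = 4 * (H:ℝ) * n ^ 2 := by ring
      have hHpos : (0:ℝ) < H := by exact_mod_cast hH1
      have h3 : ‖Z n‖ ^ 2 ≤ 4 / (H:ℝ) * n ^ 2 := by
        rw [div_mul_eq_mul_div, le_div_iff₀ hHpos]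
        nlinarith
      calc ‖Z n‖ ^ 2 ≤ 4 / (H:ℝ) * n ^ 2 := h3
        _ < ε ^ 2 * n ^ 2 := by
            have : (0:ℝ) < n ^ 2 := by positivity
            exact mul_lt_mul_of_pos_right hHbig this
        _ = (ε * n) ^ 2 := by ring
    have hlt : ‖Z n‖ < ε * n :=
      lt_of_pow_lt_pow_left₀ 2 (by positivity) hsq
    have : ‖((1 / (n:ℝ) : ℝ) : ℂ) * Z n‖ = ‖Z n‖ / n := by
      rw [norm_mul, Complex.norm_real, Real.norm_eq_abs, abs_of_pos (by positivity)]
      field_simp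
    rw [this, div_lt_iff₀ hnpos]
    linarith
  -- identify real and imaginary parts
  have hZnat : ∀ n : ℕ, Z n = ∑ t ∈ Finset.Icc 1 n, e (φ * (t:ℝ) ^ 2) := by
    intro n
    have h := nat_int_sum (fun s => e (φ * (s:ℝ) ^ 2)) n
    rw [hZ]
    simp only
    rw [← h]
    refine Finset.sum_congr rfl fun t _ => ?_
    norm_num
  constructor
  · have hre := (Complex.continuous_re.tendsto 0).comp main
    simp only [Complex.zero_re] at hre
    refine hre.congr fun n => ?_
    simp only [Function.comp_apply, hZnat n, Complex.re_ofReal_mul, Complex.re_sum, e_re]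
  · have him := (Complex.continuous_im.tendsto 0).comp main
    simp only [Complex.zero_im] at him
    refine him.congr fun n => ?_
    simp only [Function.comp_apply, hZnat n, Complex.im_ofReal_mul, Complex.im_sum, e_im]
end

section
/- For all but countably many φ in (0, π) and every nonnegative integer k, lim_{n→∞} (1/n^{k+1}) Σ_{t=1}^n t^k cos²(φ t²) = 1/(2(k+1)), and the same with sin² in place of cos². -/
open Filter Finset Complex Asymptotics

-- geometric sum bound for unit-circle ratio
lemma geomBound {r : ℂ} (hr : r ≠ 1) (hn : ‖r‖ = 1) (n : ℕ) :
    ‖∑ t ∈ Icc 1 n, r ^ t‖ ≤ 2 / ‖1 - r‖ := by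
  have h1 : (∑ t ∈ Icc 1 n, r ^ t) = (∑ t ∈ range (n+1), r ^ t) - 1 := by
    rw [Finset.range_eq_Ico, ← Finset.Ico_add_one_right_eq_Icc,
      Finset.sum_eq_sum_Ico_succ_bot (Nat.succ_pos n)]
    simp
  rw [h1, geom_sum_eq hr]
  have hr' : r - 1 ≠ 0 := sub_ne_zero.mpr hr
  have : (r ^ (n + 1) - 1) / (r - 1) - 1 = (r ^ (n+1) - r) / (r - 1) := by
    field_simp
    ring
  rw [this, norm_div]
  have h2 : ‖r ^ (n+1) - r‖ ≤ 2 := by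
    calc ‖r ^ (n+1) - r‖ ≤ ‖r ^ (n+1)‖ + ‖r‖ := norm_sub_le _ _
    _ ≤ 2 := by rw [norm_pow, hn]; norm_num
  have h3 : ‖r - 1‖ = ‖1 - r‖ := by rw [← norm_neg]; ring_nf
  rw [h3]
  gcongr

lemma IccSumEq {M : Type*} [AddCommMonoid M] (f : ℕ → M) (n : ℕ) :
    ∑ t ∈ Icc 1 n, f t = ∑ i ∈ range n, f (i + 1) := by
  rw [← Finset.Ico_add_one_right_eq_Icc, Finset.sum_Ico_eq_sum_range]
  simp [add_comm]

lemma sumIdTop : Tendsto (fun n : ℕ => ∑ i ∈ range n, (i : ℝ)) atTop atTop := by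
  apply tendsto_atTop_mono' atTop (f₁ := fun n : ℕ => (n : ℝ) - 1)
  · filter_upwards [eventually_ge_atTop 1] with n hn
    have h1 : n - 1 ∈ range n := by
      simp only [mem_range]; omega
    have h2 := Finset.single_le_sum (f := fun i : ℕ => (i : ℝ))
      (fun i _ => by positivity) h1
    calc (n : ℝ) - 1 = ((n - 1 : ℕ) : ℝ) := by
          rw [Nat.cast_sub hn]; norm_num
    _ ≤ _ := h2
  · simpa [sub_eq_add_neg] using
      tendsto_atTop_add_const_right atTop (-1 : ℝ) tendsto_natCast_atTop_atTop

lemma sumPowTop {k : ℕ} (hk : 1 ≤ k) :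
    Tendsto (fun n : ℕ => ∑ i ∈ range n, (i : ℝ) ^ k) atTop atTop := by
  apply tendsto_atTop_mono _ sumIdTop
  intro n
  apply Finset.sum_le_sum
  intro i _
  rcases Nat.eq_zero_or_pos i with hi | hi
  · simp [hi, zero_pow (by omega : k ≠ 0)]
  · exact le_self_pow₀ (by exact_mod_cast hi) (by omega)

lemma powerSum (k : ℕ) :
    Tendsto (fun n : ℕ => (∑ t ∈ Icc 1 n, (t : ℝ) ^ k) / (n : ℝ) ^ (k + 1))
      atTop (nhds (1 / ((k : ℝ) + 1))) := by
  rcases Nat.eq_zero_or_pos k with hk | hk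
  · subst hk
    have : ∀ᶠ n : ℕ in atTop,
        (1 : ℝ) = (∑ t ∈ Icc 1 n, (t : ℝ) ^ 0) / (n : ℝ) ^ (0 + 1) := by
      filter_upwards [eventually_ge_atTop 1] with n hn
      have hn' : (0 : ℝ) < n := by exact_mod_cast hn
      simp only [pow_zero, Finset.sum_const, Nat.card_Icc, Nat.add_sub_cancel,
        nsmul_eq_mul, mul_one, pow_one]
      rw [zero_add, pow_one, div_self hn'.ne']
    have := (tendsto_const_nhds (x := (1:ℝ)) (f := atTop)).congr' this
    norm_num at this ⊢
    exact this
  · set K : ℝ := (k : ℝ) + 1 with hK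
    have hKpos : (0:ℝ) < K := by positivity
    set d : ℕ → ℝ :=
      fun t => K * (t:ℝ)^k - ((t:ℝ)^(k+1) - ((t:ℝ)-1)^(k+1)) with hd
    -- step B : d t / t^k → 0
    have hdiv : Tendsto (fun t : ℕ => d t / (t:ℝ)^k) atTop (nhds 0) := by
      have hr : Tendsto (fun t : ℕ => ((t:ℝ)-1)/(t:ℝ)) atTop (nhds 1) := by
        have h1 : Tendsto (fun t : ℕ => 1 - 1/(t:ℝ)) atTop (nhds 1) := by
          simpa using (tendsto_const_nhds (x := (1:ℝ))).sub tendsto_one_div_atTop_nhds_zero_nat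
        apply h1.congr'
        filter_upwards [eventually_ge_atTop 1] with t ht
        have ht' : (t:ℝ) ≠ 0 := by
          have : (0:ℝ) < t := by exact_mod_cast ht
          exact this.ne'
        field_simp
      have hg : Continuous (fun x : ℝ => K - ∑ j ∈ range (k+1), x ^ j) := by
        continuity
      have h0 : Tendsto
          (fun t : ℕ => K - ∑ j ∈ range (k+1), (((t:ℝ)-1)/(t:ℝ)) ^ j)
          atTop (nhds 0) := by
        have h2 := (hg.tendsto 1).comp hr
        simp only [one_pow, Finset.sum_const, Finset.card_range, nsmul_eq_mul,
          mul_one, hK] at h2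
        convert h2 using 2
        · simp only [Function.comp_apply, hK]
        · push_cast
          ring
      apply h0.congr'
      filter_upwards [eventually_ge_atTop 1] with t ht
      have htpos : (0:ℝ) < t := by exact_mod_cast ht
      have ht' : (t:ℝ) ≠ 0 := htpos.ne'
      have hgeom : (t:ℝ)^(k+1) - ((t:ℝ)-1)^(k+1)
          = ∑ i ∈ range (k+1), (t:ℝ)^i * ((t:ℝ)-1)^(k-i) := by
        have h3 := geom_sum₂_mul (t:ℝ) ((t:ℝ)-1) (k+1)
        simp only [sub_sub_cancel, mul_one] at h3
        rw [← h3]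
        apply Finset.sum_congr rfl
        intro i hi
        congr 1
      have key : (∑ j ∈ range (k+1), (((t:ℝ)-1)/(t:ℝ)) ^ j) * (t:ℝ)^k
          = ∑ i ∈ range (k+1), (t:ℝ)^i * ((t:ℝ)-1)^(k-i) := by
        conv_rhs => rw [← Finset.sum_range_reflect]
        rw [Finset.sum_mul]
        apply Finset.sum_congr rfl
        intro j hj
        rw [mem_range] at hj
        have hj' : j ≤ k := by omega
        have e1 : k + 1 - 1 - j = k - j := by omega
        have e2 : k - (k - j) = j := by omega
        rw [e1, e2, div_pow, div_mul_eq_mul_div, div_eq_iff (by positivity)]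
        have hpw : (t:ℝ)^(k-j) * (t:ℝ)^j = (t:ℝ)^k := by
          rw [← pow_add]; congr 1; omega
        rw [← hpw]; ring
      rw [hd]
      simp only []
      rw [hgeom, ← key]
      field_simp
    -- step C : littleO
    have hlo : (fun t : ℕ => d t) =o[atTop] (fun t : ℕ => (t:ℝ)^k) := by
      rw [isLittleO_iff_tendsto']
      · exact hdiv
      · filter_upwards [eventually_ge_atTop 1] with t ht h
        have : (0:ℝ) < t := by exact_mod_cast ht
        exact absurd h (pow_pos this k).ne'
    set d' : ℕ → ℝ := fun t => if t = 0 then 0 else d t with hd'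
    have hlo' : (fun t : ℕ => d' t) =o[atTop] (fun t : ℕ => (t:ℝ)^k) := by
      apply EventuallyEq.trans_isLittleO _ hlo
      filter_upwards [eventually_ge_atTop 1] with t ht
      simp only [hd']
      rw [if_neg (by omega : ¬ t = 0)]
    have hsum := hlo'.sum_range (fun i => by positivity) (sumPowTop hk)
    have hcomp := hsum.comp_tendsto (tendsto_add_atTop_nat 1)
    have hO : (fun n : ℕ => ∑ i ∈ range (n+1), (i:ℝ)^k)
        =O[atTop] (fun n : ℕ => (n:ℝ)^(k+1)) := by
      apply IsBigO.of_bound 2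
      filter_upwards [eventually_ge_atTop 1] with n hn
      have hn' : (1:ℝ) ≤ n := by exact_mod_cast hn
      have h1 : ∑ i ∈ range (n+1), (i:ℝ)^k ≤ ∑ i ∈ range (n+1), (n:ℝ)^k := by
        apply Finset.sum_le_sum
        intro i hi
        rw [mem_range] at hi
        have : (i:ℝ) ≤ n := by exact_mod_cast Nat.lt_succ_iff.mp hi
        exact pow_le_pow_left₀ (by positivity) this k
      have h2 : (∑ i ∈ range (n+1), (n:ℝ)^k) = ((n:ℝ)+1) * (n:ℝ)^k := by
        rw [Finset.sum_const, Finset.card_range]; push_cast; ring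
      have h3 : ((n:ℝ)+1) * (n:ℝ)^k ≤ 2 * (n:ℝ)^(k+1) := by
        rw [pow_succ]
        nlinarith [pow_pos (show (0:ℝ) < n by linarith) k]
      have h4 : (0:ℝ) ≤ ∑ i ∈ range (n+1), (i:ℝ)^k := by positivity
      rw [Real.norm_eq_abs, Real.norm_eq_abs, _root_.abs_of_nonneg h4,
        _root_.abs_of_nonneg (by positivity)]
      linarith
    have htot : (fun n : ℕ => ∑ i ∈ range (n+1), d' i)
        =o[atTop] (fun n : ℕ => (n:ℝ)^(k+1)) := hcomp.trans_isBigO hO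
    have hid : ∀ n : ℕ, ∑ i ∈ range (n+1), d' i
        = K * (∑ t ∈ Icc 1 n, (t:ℝ)^k) - (n:ℝ)^(k+1) := by
      intro n
      rw [Finset.sum_range_succ']
      have e0 : d' 0 = 0 := by simp [hd']
      rw [e0, add_zero]
      have e1 : ∀ i, d' (i+1) = K * ((i+1:ℕ):ℝ)^k
          - (((i:ℝ)+1)^(k+1) - (i:ℝ)^(k+1)) := by
        intro i
        simp only [hd', hd, if_neg (Nat.succ_ne_zero i)]
        push_cast
        ring_nf
      simp_rw [e1]
      rw [Finset.sum_sub_distrib, ← Finset.mul_sum]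
      have tele : ∑ x ∈ range n, (((x:ℝ)+1)^(k+1) - (x:ℝ)^(k+1)) = (n:ℝ)^(k+1) := by
        have h5 := Finset.sum_range_sub (f := fun i : ℕ => ((i:ℝ))^(k+1)) n
        push_cast at h5
        simpa using h5
      rw [tele, IccSumEq (fun t : ℕ => (t:ℝ)^k) n]
    have htot2 : (fun n : ℕ => K * (∑ t ∈ Icc 1 n, (t:ℝ)^k) - (n:ℝ)^(k+1))
        =o[atTop] (fun n : ℕ => (n:ℝ)^(k+1)) := by
      apply htot.congr' _ EventuallyEq.rfl
      filter_upwards with n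
      exact hid n
    have hT := htot2.tendsto_div_nhds_zero
    have hT2 : Tendsto (fun n : ℕ =>
        ((K * (∑ t ∈ Icc 1 n, (t:ℝ)^k) - (n:ℝ)^(k+1)) / (n:ℝ)^(k+1) + 1) / K)
        atTop (nhds (1 / K)) := by
      have := (hT.add_const 1).div_const K
      simpa using this
    apply hT2.congr'
    filter_upwards [eventually_ge_atTop 1] with n hn
    have hn' : (0:ℝ) < n := by exact_mod_cast hn
    have hne : (n:ℝ)^(k+1) ≠ 0 := by positivity
    field_simp
    ring

lemma sumPowBigO (k : ℕ) :
    (fun n : ℕ => ∑ i ∈ range n, (i:ℝ)^k) =O[atTop] (fun n : ℕ => (n:ℝ)^(k+1)) := by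
  apply IsBigO.of_bound 1
  filter_upwards with n
  have h1 : ∑ i ∈ range n, (i:ℝ)^k ≤ ∑ i ∈ range n, (n:ℝ)^k := by
    apply Finset.sum_le_sum
    intro i hi
    rw [mem_range] at hi
    exact pow_le_pow_left₀ (by positivity) (by exact_mod_cast hi.le) k
  have h2 : (∑ i ∈ range n, (n:ℝ)^k) = (n:ℝ) * (n:ℝ)^k := by
    rw [Finset.sum_const, Finset.card_range, nsmul_eq_mul]
  rw [Real.norm_eq_abs, Real.norm_eq_abs, _root_.abs_of_nonneg (by positivity),
    _root_.abs_of_nonneg (by positivity), one_mul, pow_succ, mul_comm ((n:ℝ)^k) _]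
  linarith

lemma weightedZero (k : ℕ) {b : ℕ → ℝ}
    (h : Tendsto (fun n : ℕ => (∑ t ∈ Icc 1 n, b t) / (n:ℝ)) atTop (nhds 0)) :
    Tendsto (fun n : ℕ => (∑ t ∈ Icc 1 n, (t:ℝ)^k * b t) / (n:ℝ)^(k+1))
      atTop (nhds 0) := by
  obtain rfl | hk := Nat.eq_zero_or_pos k
  · simpa using h
  have hGo : (fun n : ℕ => ∑ t ∈ Icc 1 n, b t) =o[atTop] (fun n : ℕ => (n:ℝ)) := by
    rw [isLittleO_iff_tendsto']
    · exact h
    · filter_upwards [eventually_ge_atTop 1] with n hn hn0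
      have : (0:ℝ) < n := by exact_mod_cast hn
      exact absurd hn0 this.ne'
  set c : ℕ → ℝ := fun t => if t = 0 then 0 else b t with hc
  have hG : ∀ n : ℕ, ∑ i ∈ range (n+1), c i = ∑ t ∈ Icc 1 n, b t := by
    intro n
    rw [Finset.sum_range_succ']
    simp only [hc, if_neg (Nat.succ_ne_zero _), if_pos rfl, add_zero]
    rw [IccSumEq b n]
  have hGo' : (fun i : ℕ => ∑ j ∈ range (i+1), c j) =o[atTop] (fun i : ℕ => (i:ℝ)) := by
    apply EventuallyEq.trans_isLittleO _ hGo
    filter_upwards with i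
    exact hG i
  -- summation by parts
  have parts : ∀ n : ℕ, ∑ t ∈ Icc 1 n, (t:ℝ)^k * b t
      = (n:ℝ)^k * (∑ j ∈ range (n+1), c j)
        - ∑ i ∈ range n, (((i+1:ℕ):ℝ)^k - (i:ℝ)^k) * (∑ j ∈ range (i+1), c j) := by
    intro n
    have hbp := Finset.sum_range_by_parts (fun i : ℕ => (i:ℝ)^k) c (n+1)
    simp only [smul_eq_mul, Nat.add_sub_cancel] at hbp
    rw [← hbp]
    rw [Finset.sum_range_succ']
    simp only [hc, if_pos rfl, mul_zero, add_zero]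
    rw [IccSumEq (fun t : ℕ => (t:ℝ)^k * b t) n]
    apply Finset.sum_congr rfl
    intro i _
    rw [if_neg (Nat.succ_ne_zero i)]
  -- first term is o(n^(k+1))
  have hT1 : (fun n : ℕ => (n:ℝ)^k * (∑ j ∈ range (n+1), c j))
      =o[atTop] (fun n : ℕ => (n:ℝ)^(k+1)) := by
    have := (isBigO_refl (fun n : ℕ => (n:ℝ)^k) atTop).mul_isLittleO hGo'
    apply this.trans_isBigO
    apply Filter.EventuallyEq.isBigO
    filter_upwards with n
    rw [← pow_succ]
  -- weights are O(i^(k-1))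
  have hw : (fun i : ℕ => ((i+1:ℕ):ℝ)^k - (i:ℝ)^k)
      =O[atTop] (fun i : ℕ => (i:ℝ)^(k-1)) := by
    apply IsBigO.of_bound ((k:ℝ) * 2^(k-1))
    filter_upwards [eventually_ge_atTop 1] with i hi
    have hi1 : (1:ℝ) ≤ i := by exact_mod_cast hi
    have hgeom : ((i:ℝ)+1)^k - (i:ℝ)^k
        = ∑ m ∈ range k, ((i:ℝ)+1)^m * (i:ℝ)^(k-1-m) := by
      have h3 := geom_sum₂_mul ((i:ℝ)+1) (i:ℝ) k
      simp only [add_sub_cancel_left, mul_one] at h3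
      rw [← h3]
    have hterm : ∀ m ∈ range k, ((i:ℝ)+1)^m * (i:ℝ)^(k-1-m) ≤ 2^(k-1) * (i:ℝ)^(k-1) := by
      intro m hm
      rw [mem_range] at hm
      have h4 : ((i:ℝ)+1)^m * (i:ℝ)^(k-1-m) ≤ (2*(i:ℝ))^m * (i:ℝ)^(k-1-m) := by
        gcongr
        linarith
      have h5 : (2*(i:ℝ))^m * (i:ℝ)^(k-1-m) = 2^m * (i:ℝ)^(k-1) := by
        rw [mul_pow, mul_assoc, ← pow_add]
        congr 2
        omega
      have h6 : (2:ℝ)^m ≤ 2^(k-1) := by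
        apply pow_le_pow_right₀ (by norm_num)
        omega
      nlinarith [pow_pos (show (0:ℝ) < i by linarith) (k-1)]
    have hnn : (0:ℝ) ≤ ((i:ℝ)+1)^k - (i:ℝ)^k := by
      rw [sub_nonneg]
      gcongr
      all_goals linarith
    have hsum := Finset.sum_le_sum hterm
    rw [Finset.sum_const, Finset.card_range, nsmul_eq_mul] at hsum
    rw [Real.norm_eq_abs, Real.norm_eq_abs]
    push_cast
    rw [_root_.abs_of_nonneg hnn, _root_.abs_of_nonneg (by positivity)]
    calc ((i:ℝ)+1)^k - (i:ℝ)^k = ∑ m ∈ range k, ((i:ℝ)+1)^m * (i:ℝ)^(k-1-m) := hgeom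
    _ ≤ (k:ℝ) * (2^(k-1) * (i:ℝ)^(k-1)) := hsum
    _ = (k:ℝ) * 2^(k-1) * (i:ℝ)^(k-1) := by ring
  -- product is o(i^k)
  have hf2 : (fun i : ℕ => (((i+1:ℕ):ℝ)^k - (i:ℝ)^k) * (∑ j ∈ range (i+1), c j))
      =o[atTop] (fun i : ℕ => (i:ℝ)^k) := by
    have := hw.mul_isLittleO hGo'
    apply this.trans_isBigO
    apply Filter.EventuallyEq.isBigO
    filter_upwards with i
    rw [← pow_succ]
    congr 1
    omega
  have hsum2 := hf2.sum_range (fun i => by positivity) (sumPowTop hk)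
  have hT2 := hsum2.trans_isBigO (sumPowBigO k)
  have htot : (fun n : ℕ => ∑ t ∈ Icc 1 n, (t:ℝ)^k * b t)
      =o[atTop] (fun n : ℕ => (n:ℝ)^(k+1)) := by
    apply EventuallyEq.trans_isLittleO _ (hT1.sub hT2)
    filter_upwards with n
    exact parts n
  exact htot.tendsto_div_nhds_zero

lemma vdcKey {θ : ℝ} (hθ : ∀ d : ℤ, d ≠ 0 → Complex.exp ((2 * θ * d : ℝ) * I) ≠ 1)
    (H : ℕ) (hH : 1 ≤ H) : ∃ D : ℝ, 0 ≤ D ∧ ∀ n : ℕ, 1 ≤ n →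
    ‖∑ t ∈ Icc 1 n, Complex.exp ((θ * (t:ℝ)^2 : ℝ) * I)‖
      ≤ Real.sqrt ((n:ℝ) * ((H:ℝ) * n + D)) / H + H := by
  set a : ℕ → ℂ := fun t => Complex.exp ((θ * (t:ℝ)^2 : ℝ) * I) with ha
  have hnorm : ∀ t, ‖a t‖ = 1 := fun t => Complex.norm_exp_ofReal_mul_I _
  have hcard : ∀ s : Finset ℕ, ‖∑ t ∈ s, a t‖ ≤ (s.card : ℝ) := by
    intro s
    calc ‖∑ t ∈ s, a t‖ ≤ ∑ t ∈ s, ‖a t‖ := norm_sum_le _ _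
    _ = s.card := by simp [hnorm]
  set A : ℕ → ℂ := fun m => ∑ t ∈ Icc 1 m, a t with hA
  set b : ℕ → ℂ := fun t => ∑ j ∈ range H, a (t + j) with hb
  -- correlation formula
  have hcorr : ∀ (j j' t : ℕ), a (t + j) * (starRingEnd ℂ) (a (t + j'))
      = Complex.exp ((θ * ((j:ℝ)^2 - (j':ℝ)^2) : ℝ) * I)
        * (Complex.exp ((2 * θ * ((j:ℝ) - (j':ℝ)) : ℝ) * I)) ^ t := by
    intro j j' t
    have hc : (starRingEnd ℂ) (a (t + j')) =
        Complex.exp (-((θ * ((t + j' : ℕ):ℝ)^2 : ℝ) * I)) := by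
      rw [ha]
      simp only []
      rw [← Complex.exp_conj]
      congr 1
      simp [Complex.conj_ofReal]
    rw [hc, ← Complex.exp_nat_mul, ← Complex.exp_add, ← Complex.exp_add]
    congr 1
    push_cast
    ring
  -- diagonal
  have hdiag : ∀ (j t : ℕ), a (t + j) * (starRingEnd ℂ) (a (t + j)) = 1 := by
    intro j t
    rw [Complex.mul_conj]
    norm_cast
    rw [← Complex.sq_norm, hnorm]
    norm_num
  set Dt : ℕ → ℕ → ℝ := fun j j' =>
    if j = j' then 0
    else 2 / ‖1 - Complex.exp ((2 * θ * ((j:ℝ) - (j':ℝ)) : ℝ) * I)‖ with hDt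
  set D : ℝ := ∑ j ∈ range H, ∑ j' ∈ range H, Dt j j' with hD
  have hDt0 : ∀ j j', 0 ≤ Dt j j' := by
    intro j j'
    rw [hDt]
    dsimp only
    split
    · exact le_rfl
    · positivity
  refine ⟨D, Finset.sum_nonneg fun j _ => Finset.sum_nonneg fun j' _ => hDt0 j j', ?_⟩
  intro n hn
  have hnpos : (0:ℝ) < n := by exact_mod_cast hn
  have hHpos : (0:ℝ) < H := by exact_mod_cast hH
  -- correlation sums bounded
  have hcorrB : ∀ j ∈ range H, ∀ j' ∈ range H,
      ‖∑ t ∈ Icc 1 n, a (t + j) * (starRingEnd ℂ) (a (t + j'))‖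
        ≤ (if j = j' then (n:ℝ) else 0) + Dt j j' := by
    intro j _ j' _
    rcases eq_or_ne j j' with rfl | hne
    · simp only [if_pos rfl, add_zero]
      have : Dt j j = 0 := by rw [hDt]; simp
      rw [this, add_zero]
      simp_rw [hdiag j]
      rw [Finset.sum_const, Nat.card_Icc]
      simp
    · rw [if_neg hne, zero_add, hDt]
      dsimp only
      rw [if_neg hne]
      have hw : Complex.exp ((2 * θ * ((j:ℝ) - (j':ℝ)) : ℝ) * I) ≠ 1 := by
        have hd : ((j:ℤ) - (j':ℤ)) ≠ 0 := by
          intro hcon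
          apply hne
          omega
        have h8 := hθ _ hd
        convert h8 using 3
        push_cast
        ring
      have hw1 : ‖Complex.exp ((2 * θ * ((j:ℝ) - (j':ℝ)) : ℝ) * I)‖ = 1 :=
        Complex.norm_exp_ofReal_mul_I _
      calc ‖∑ t ∈ Icc 1 n, a (t + j) * (starRingEnd ℂ) (a (t + j'))‖
          = ‖Complex.exp ((θ * ((j:ℝ)^2 - (j':ℝ)^2) : ℝ) * I)
            * ∑ t ∈ Icc 1 n, (Complex.exp ((2 * θ * ((j:ℝ) - (j':ℝ)) : ℝ) * I)) ^ t‖ := by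
            rw [Finset.mul_sum]
            congr 1
            apply Finset.sum_congr rfl
            intro t _
            exact hcorr j j' t
      _ = ‖∑ t ∈ Icc 1 n, (Complex.exp ((2 * θ * ((j:ℝ) - (j':ℝ)) : ℝ) * I)) ^ t‖ := by
            rw [norm_mul, Complex.norm_exp_ofReal_mul_I, one_mul]
      _ ≤ 2 / ‖1 - Complex.exp ((2 * θ * ((j:ℝ) - (j':ℝ)) : ℝ) * I)‖ :=
            geomBound hw hw1 n
  -- second moment
  have hmoment : ∑ t ∈ Icc 1 n, ‖b t‖^2 ≤ (H:ℝ) * n + D := by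
    have e1 : ∀ t : ℕ, (‖b t‖^2 : ℝ) = (b t * (starRingEnd ℂ) (b t)).re := by
      intro t
      rw [Complex.mul_conj]
      norm_cast
      rw [← Complex.sq_norm]
    have e2 : ∑ t ∈ Icc 1 n, ‖b t‖^2
        = (∑ j ∈ range H, ∑ j' ∈ range H,
            ∑ t ∈ Icc 1 n, a (t + j) * (starRingEnd ℂ) (a (t + j'))).re := by
      simp_rw [e1]
      rw [← Complex.re_sum]
      congr 1
      have e3 : ∀ t : ℕ, b t * (starRingEnd ℂ) (b t)
          = ∑ j ∈ range H, ∑ j' ∈ range H,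
              a (t + j) * (starRingEnd ℂ) (a (t + j')) := by
        intro t
        rw [hb]
        dsimp only
        rw [map_sum, Finset.sum_mul_sum]
      simp_rw [e3]
      rw [Finset.sum_comm]
      apply Finset.sum_congr rfl
      intro j _
      rw [Finset.sum_comm]
    rw [e2]
    calc (∑ j ∈ range H, ∑ j' ∈ range H,
            ∑ t ∈ Icc 1 n, a (t + j) * (starRingEnd ℂ) (a (t + j'))).re
        ≤ ‖∑ j ∈ range H, ∑ j' ∈ range H,
            ∑ t ∈ Icc 1 n, a (t + j) * (starRingEnd ℂ) (a (t + j'))‖ :=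
          Complex.re_le_norm _
    _ ≤ ∑ j ∈ range H, ‖∑ j' ∈ range H,
            ∑ t ∈ Icc 1 n, a (t + j) * (starRingEnd ℂ) (a (t + j'))‖ :=
          norm_sum_le _ _
    _ ≤ ∑ j ∈ range H, ∑ j' ∈ range H,
            ‖∑ t ∈ Icc 1 n, a (t + j) * (starRingEnd ℂ) (a (t + j'))‖ :=
          Finset.sum_le_sum fun j _ => norm_sum_le _ _
    _ ≤ ∑ j ∈ range H, ∑ j' ∈ range H,
            ((if j = j' then (n:ℝ) else 0) + Dt j j') :=
          Finset.sum_le_sum fun j hj => Finset.sum_le_sum fun j' hj' =>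
            hcorrB j hj j' hj'
    _ = (H:ℝ) * n + D := by
          rw [hD]
          simp_rw [Finset.sum_add_distrib]
          congr 1
          have e4 : ∀ j ∈ range H,
              ∑ j' ∈ range H, (if j = j' then (n:ℝ) else 0) = (n:ℝ) := by
            intro j hj
            rw [Finset.sum_ite_eq]
            simp [hj]
          rw [Finset.sum_congr rfl e4, Finset.sum_const, Finset.card_range,
            nsmul_eq_mul]
  -- Cauchy-Schwarz
  have hCS : ‖∑ t ∈ Icc 1 n, b t‖^2 ≤ (n:ℝ) * ((H:ℝ) * n + D) := by
    have h1 : ‖∑ t ∈ Icc 1 n, b t‖ ≤ ∑ t ∈ Icc 1 n, ‖b t‖ := norm_sum_le _ _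
    have h2 : (∑ t ∈ Icc 1 n, ‖b t‖)^2 ≤ (n:ℝ) * ∑ t ∈ Icc 1 n, ‖b t‖^2 := by
      have h3 := sq_sum_le_card_mul_sum_sq (s := Icc 1 n) (f := fun t => ‖b t‖)
      have h4 : ((Icc 1 n).card : ℝ) = n := by rw [Nat.card_Icc]; push_cast; ring
      rw [h4] at h3
      exact_mod_cast h3
    have h5 : ‖∑ t ∈ Icc 1 n, b t‖^2 ≤ (∑ t ∈ Icc 1 n, ‖b t‖)^2 := by
      apply pow_le_pow_left₀ (norm_nonneg _) h1
    calc ‖∑ t ∈ Icc 1 n, b t‖^2 ≤ (∑ t ∈ Icc 1 n, ‖b t‖)^2 := h5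
    _ ≤ (n:ℝ) * ∑ t ∈ Icc 1 n, ‖b t‖^2 := h2
    _ ≤ (n:ℝ) * ((H:ℝ) * n + D) := by
        apply mul_le_mul_of_nonneg_left hmoment (by positivity)
  -- shifting
  have hshift : ‖(H:ℂ) * A n - ∑ t ∈ Icc 1 n, b t‖ ≤ (H:ℝ)^2 := by
    have e3 : ∑ t ∈ Icc 1 n, b t = ∑ j ∈ range H, ∑ t ∈ Icc 1 n, a (t + j) := by
      rw [hb]
      exact Finset.sum_comm
    have e4 : ∀ j : ℕ, ∑ t ∈ Icc 1 n, a (t + j) = A (n + j) - A j := by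
      intro j
      have i2 : ∀ m : ℕ, Icc 1 m = Ioc 0 m := fun m => Finset.Icc_add_one_left_eq_Ioc 0 m
      have m1 : ∑ t ∈ Icc 1 n, a (t + j) = ∑ t ∈ Ioc j (n + j), a t := by
        have i1 : Ioc j (n + j) = (Icc 1 n).map (addRightEmbedding j) := by
          rw [Finset.map_add_right_Icc, ← Finset.Icc_add_one_left_eq_Ioc]
          congr 1
          omega
        rw [i1, Finset.sum_map]
        apply Finset.sum_congr rfl
        intro t _
        simp [addRightEmbedding_apply]
      have m2 : A j + ∑ t ∈ Ioc j (n + j), a t = A (n + j) := by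
        rw [hA]
        dsimp only
        rw [i2 j, i2 (n + j)]
        exact Finset.sum_Ioc_consecutive a (Nat.zero_le j) (Nat.le_add_left j n)
      rw [m1]
      linear_combination m2 - (0:ℂ)
    have e5 : (H:ℂ) * A n = ∑ _j ∈ range H, A n := by
      rw [Finset.sum_const, Finset.card_range, nsmul_eq_mul]
    rw [e3, e5, ← Finset.sum_sub_distrib]
    have e6 : ∀ j ∈ range H, ‖A n - ∑ t ∈ Icc 1 n, a (t + j)‖ ≤ 2 * (j:ℝ) := by
      intro j _
      rw [e4 j]
      have m3 : A (n + j) - A n = ∑ t ∈ Ioc n (n + j), a t := by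
        have i2 : ∀ m : ℕ, Icc 1 m = Ioc 0 m := fun m => Finset.Icc_add_one_left_eq_Ioc 0 m
        have m4 : A n + ∑ t ∈ Ioc n (n + j), a t = A (n + j) := by
          rw [hA]
          dsimp only
          rw [i2 n, i2 (n + j)]
          exact Finset.sum_Ioc_consecutive a (Nat.zero_le n) (Nat.le_add_right n j)
        linear_combination (-1 : ℂ) * m4
      have m5 : ‖A (n + j) - A n‖ ≤ (j:ℝ) := by
        rw [m3]
        calc ‖∑ t ∈ Ioc n (n + j), a t‖ ≤ ((Ioc n (n + j)).card : ℝ) := hcard _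
        _ = (j:ℝ) := by simp [Nat.card_Ioc]
      have m6 : ‖A j‖ ≤ (j:ℝ) := by
        calc ‖A j‖ ≤ ((Icc 1 j).card : ℝ) := hcard _
        _ = (j:ℝ) := by simp [Nat.card_Icc]
      calc ‖A n - (A (n + j) - A j)‖
          = ‖A j - (A (n + j) - A n)‖ := by rw [show A n - (A (n + j) - A j)
            = A j - (A (n + j) - A n) from by ring]
      _ ≤ ‖A j‖ + ‖A (n + j) - A n‖ := norm_sub_le _ _
      _ ≤ (j:ℝ) + j := add_le_add m6 m5
      _ = 2 * j := by ring
    calc ‖∑ j ∈ range H, (A n - ∑ t ∈ Icc 1 n, a (t + j))‖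
        ≤ ∑ j ∈ range H, ‖A n - ∑ t ∈ Icc 1 n, a (t + j)‖ := norm_sum_le _ _
    _ ≤ ∑ j ∈ range H, 2 * (j:ℝ) := Finset.sum_le_sum e6
    _ = (H:ℝ) * (H - 1) := by
        rw [← Finset.mul_sum]
        have g1 : (∑ j ∈ range H, (j:ℝ)) = (H:ℝ) * (H - 1) / 2 := by
          have g2 := Finset.sum_range_id_mul_two H
          have g3 : ((∑ j ∈ range H, j) * 2 : ℕ) = ((H * (H - 1) : ℕ) : ℝ) := by
            exact_mod_cast congrArg (Nat.cast : ℕ → ℝ) g2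
          push_cast [Nat.cast_sub hH] at g3
          linarith
        rw [g1]
        ring
    _ ≤ (H:ℝ)^2 := by nlinarith
  -- combine
  have h6 : ‖∑ t ∈ Icc 1 n, b t‖ ≤ Real.sqrt ((n:ℝ) * ((H:ℝ) * n + D)) :=
    Real.le_sqrt_of_sq_le hCS
  have h7 : (H:ℝ) * ‖A n‖ ≤ ‖∑ t ∈ Icc 1 n, b t‖ + (H:ℝ)^2 := by
    have t1 : ‖(H:ℂ) * A n‖ = (H:ℝ) * ‖A n‖ := by
      rw [norm_mul, Complex.norm_natCast]
    calc (H:ℝ) * ‖A n‖ = ‖(H:ℂ) * A n‖ := t1.symm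
    _ = ‖((H:ℂ) * A n - ∑ t ∈ Icc 1 n, b t) + ∑ t ∈ Icc 1 n, b t‖ := by
        rw [sub_add_cancel]
    _ ≤ ‖(H:ℂ) * A n - ∑ t ∈ Icc 1 n, b t‖ + ‖∑ t ∈ Icc 1 n, b t‖ :=
        norm_add_le _ _
    _ ≤ (H:ℝ)^2 + ‖∑ t ∈ Icc 1 n, b t‖ := by gcongr
    _ = ‖∑ t ∈ Icc 1 n, b t‖ + (H:ℝ)^2 := by ring
  calc ‖A n‖ = ((H:ℝ) * ‖A n‖) / H := by field_simp
  _ ≤ (Real.sqrt ((n:ℝ) * ((H:ℝ) * n + D)) + (H:ℝ)^2) / H := by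
      gcongr
      exact h7.trans (add_le_add_left h6 _)
  _ = Real.sqrt ((n:ℝ) * ((H:ℝ) * n + D)) / H + H := by
      field_simp

lemma vdcLimit {θ : ℝ} (hθ : ∀ d : ℤ, d ≠ 0 → Complex.exp ((2 * θ * d : ℝ) * I) ≠ 1) :
    Tendsto (fun n : ℕ => (∑ t ∈ Icc 1 n, Real.cos (θ * (t:ℝ)^2)) / (n:ℝ))
      atTop (nhds 0) := by
  have hC : Tendsto (fun n : ℕ =>
      (∑ t ∈ Icc 1 n, Complex.exp ((θ * (t:ℝ)^2 : ℝ) * I)) / (n:ℂ)) atTop (nhds 0) := by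
    rw [NormedAddCommGroup.tendsto_nhds_zero]
    intro ε hε
    obtain ⟨H, hH8⟩ := exists_nat_ge (max 1 (8 / ε^2))
    have hH1R : (1:ℝ) ≤ H := le_trans (le_max_left _ _) hH8
    have hH1 : 1 ≤ H := by exact_mod_cast hH1R
    have hHε : 8 / ε^2 ≤ H := le_trans (le_max_right _ _) hH8
    obtain ⟨D, hD0, hbound⟩ := vdcKey hθ H hH1
    have hHpos : (0:ℝ) < H := by linarith
    have hsq : Real.sqrt (2 * H) / H ≤ ε / 2 := by
      rw [div_le_iff₀ hHpos, Real.sqrt_le_left (by positivity)]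
      have h8 : 8 ≤ ε^2 * H := by
        rw [div_le_iff₀ (by positivity)] at hHε
        linarith
      nlinarith
    obtain ⟨N1, hN1⟩ := exists_nat_ge (D / H)
    obtain ⟨N2, hN2⟩ := exists_nat_ge (4 * H / ε)
    filter_upwards [eventually_ge_atTop (max 1 (max N1 N2))] with n hn
    have hn1 : 1 ≤ n := le_trans (le_max_left _ _) hn
    have hnN1 : N1 ≤ n := le_trans (le_trans (le_max_left _ _) (le_max_right _ _)) hn
    have hnN2 : N2 ≤ n := le_trans (le_trans (le_max_right _ _) (le_max_right _ _)) hn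
    have hnpos : (0:ℝ) < n := by exact_mod_cast hn1
    rw [norm_div, Complex.norm_natCast]
    have hb := hbound n hn1
    have hDHn : D ≤ (H:ℝ) * n := by
      have h1 : D / H ≤ (n:ℝ) := le_trans hN1 (by exact_mod_cast hnN1)
      rw [div_le_iff₀ hHpos] at h1
      nlinarith
    have hsqrt : Real.sqrt ((n:ℝ) * ((H:ℝ)*n + D)) ≤ Real.sqrt (2*H) * n := by
      have h2 : (n:ℝ) * ((H:ℝ)*n + D) ≤ 2*H*(n:ℝ)^2 := by nlinarith
      calc Real.sqrt ((n:ℝ) * ((H:ℝ)*n + D)) ≤ Real.sqrt (2*H*(n:ℝ)^2) :=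
            Real.sqrt_le_sqrt h2
      _ = Real.sqrt (2*H) * n := by
            rw [Real.sqrt_mul (by positivity), Real.sqrt_sq hnpos.le]
    have hHn : (H:ℝ)/n ≤ ε/4 := by
      have h3 : (4*H/ε : ℝ) ≤ n := le_trans hN2 (by exact_mod_cast hnN2)
      rw [div_le_iff₀ (by positivity)] at h3
      rw [div_le_iff₀ hnpos]
      linarith
    calc ‖∑ t ∈ Icc 1 n, Complex.exp ((θ * (t:ℝ)^2 : ℝ) * I)‖ / (n:ℝ)
        ≤ (Real.sqrt ((n:ℝ) * ((H:ℝ)*n + D)) / H + H) / n := by gcongr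
    _ ≤ (Real.sqrt (2*H) * n / H + H) / n := by gcongr
    _ = Real.sqrt (2*H)/H + (H:ℝ)/n := by field_simp
    _ ≤ ε/2 + ε/4 := add_le_add hsq hHn
    _ < ε := by linarith
  have hre := (Complex.continuous_re.tendsto 0).comp hC
  simp only [Complex.zero_re, Function.comp_def] at hre
  apply hre.congr
  intro n
  rw [show ((n:ℕ):ℂ) = (((n:ℝ)):ℂ) by push_cast; rfl]
  rw [Complex.div_ofReal_re, Complex.re_sum]
  congr 1
  apply Finset.sum_congr rfl
  intro t _
  exact Complex.exp_ofReal_mul_I_re _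



theorem stmt4 :
    ∃ S : Set ℝ, S.Countable ∧
      ∀ φ ∈ Set.Ioo (0 : ℝ) Real.pi, φ ∉ S → ∀ k : ℕ,
        Tendsto (fun n : ℕ => (1 / (n : ℝ) ^ (k + 1)) *
            ∑ t ∈ Finset.Icc 1 n, (t : ℝ) ^ k * Real.cos (φ * (t : ℝ) ^ 2) ^ 2)
          atTop (nhds (1 / (2 * ((k : ℝ) + 1)))) ∧
        Tendsto (fun n : ℕ => (1 / (n : ℝ) ^ (k + 1)) *
            ∑ t ∈ Finset.Icc 1 n, (t : ℝ) ^ k * Real.sin (φ * (t : ℝ) ^ 2) ^ 2)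
          atTop (nhds (1 / (2 * ((k : ℝ) + 1)))) := by
  refine ⟨Set.range (fun q : ℚ => (q : ℝ) * Real.pi), Set.countable_range _, ?_⟩
  intro φ hφ hφS k
  have hθ : ∀ d : ℤ, d ≠ 0 → Complex.exp ((2 * (2 * φ) * d : ℝ) * I) ≠ 1 := by
    intro d hd hexp
    rw [Complex.exp_eq_one_iff] at hexp
    obtain ⟨m, hm⟩ := hexp
    have hI : ((2 * (2 * φ) * (d:ℝ) : ℝ) : ℂ) = (m:ℂ) * (2 * Real.pi) := by
      have := mul_right_cancel₀ Complex.I_ne_zero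
        (by rw [hm]; push_cast; ring :
          ((2 * (2 * φ) * (d:ℝ) : ℝ) : ℂ) * I = ((m:ℂ) * (2 * Real.pi)) * I)
      exact this
    have hreal : 2 * (2 * φ) * (d:ℝ) = (m:ℝ) * (2 * Real.pi) := by
      exact_mod_cast hI
    apply hφS
    refine ⟨(m : ℚ) / (2 * (d : ℚ)), ?_⟩
    have hdR : ((d:ℤ):ℝ) ≠ 0 := by exact_mod_cast hd
    push_cast
    rw [div_mul_eq_mul_div, div_eq_iff (mul_ne_zero two_ne_zero hdR)]
    linear_combination (-(1:ℝ)/2) * hreal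
  have hcos := vdcLimit (θ := 2 * φ) hθ
  have hW := weightedZero k hcos
  have hP := powerSum k
  constructor
  · have h1 : Tendsto (fun n : ℕ =>
        (1/2) * ((∑ t ∈ Icc 1 n, (t:ℝ)^k) / (n:ℝ)^(k+1))
          + (1/2) * ((∑ t ∈ Icc 1 n, (t:ℝ)^k * Real.cos (2*φ*(t:ℝ)^2)) / (n:ℝ)^(k+1)))
        atTop (nhds ((1/2) * (1/((k:ℝ)+1)) + (1/2) * 0)) :=
      (hP.const_mul _).add (hW.const_mul _)
    have h2 : (1/2) * (1/((k:ℝ)+1)) + (1/2) * (0:ℝ) = 1 / (2 * ((k:ℝ)+1)) := by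
      field_simp
      ring
    rw [h2] at h1
    apply h1.congr
    intro n
    have e : ∀ t : ℕ, (t:ℝ)^k * Real.cos (φ*(t:ℝ)^2)^2
        = (1/2) * (t:ℝ)^k + (1/2) * ((t:ℝ)^k * Real.cos (2*φ*(t:ℝ)^2)) := by
      intro t
      rw [Real.cos_sq (φ*(t:ℝ)^2), show 2*(φ*(t:ℝ)^2) = 2*φ*(t:ℝ)^2 from by ring]
      ring
    rw [Finset.sum_congr rfl (fun t _ => e t), Finset.sum_add_distrib,
      ← Finset.mul_sum, ← Finset.mul_sum]
    ring
  · have h1 : Tendsto (fun n : ℕ =>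
        (1/2) * ((∑ t ∈ Icc 1 n, (t:ℝ)^k) / (n:ℝ)^(k+1))
          - (1/2) * ((∑ t ∈ Icc 1 n, (t:ℝ)^k * Real.cos (2*φ*(t:ℝ)^2)) / (n:ℝ)^(k+1)))
        atTop (nhds ((1/2) * (1/((k:ℝ)+1)) - (1/2) * 0)) :=
      (hP.const_mul _).sub (hW.const_mul _)
    have h2 : (1/2) * (1/((k:ℝ)+1)) - (1/2) * (0:ℝ) = 1 / (2 * ((k:ℝ)+1)) := by
      field_simp
      ring
    rw [h2] at h1
    apply h1.congr
    intro n
    have e : ∀ t : ℕ, (t:ℝ)^k * Real.sin (φ*(t:ℝ)^2)^2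
        = (1/2) * (t:ℝ)^k - (1/2) * ((t:ℝ)^k * Real.cos (2*φ*(t:ℝ)^2)) := by
      intro t
      rw [Real.sin_sq (φ*(t:ℝ)^2), Real.cos_sq (φ*(t:ℝ)^2),
        show 2*(φ*(t:ℝ)^2) = 2*φ*(t:ℝ)^2 from by ring]
      ring
    rw [Finset.sum_congr rfl (fun t _ => e t), Finset.sum_sub_distrib,
      ← Finset.mul_sum, ← Finset.mul_sum]
    ring
end

section
/- For all but countably many φ in (0, π) and every nonnegative integer k, lim_{n→∞} (1/n^{k+1}) Σ_{t=1}^n t^k sin(φ t²) cos(φ t²) = 0. -/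
open Filter Finset Complex

noncomputable section

namespace Stmt5Aux

lemma norm_exp_sub_one (θ : ℝ) : ‖Complex.exp (θ * Complex.I) - 1‖ = 2 * |Real.sin (θ / 2)| := by
  rw [show ((θ : ℂ) * Complex.I) = (θ : ℂ) * Complex.I from rfl, Complex.exp_mul_I,
    ← Complex.ofReal_cos, ← Complex.ofReal_sin]
  have h1 : (Real.cos θ : ℂ) + (Real.sin θ : ℂ) * Complex.I - 1
      = ((Real.cos θ - 1 : ℝ) : ℂ) + ((Real.sin θ : ℝ) : ℂ) * Complex.I := by
    push_cast; ring
  rw [h1, Complex.norm_add_mul_I]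
  have h2 : (Real.cos θ - 1) ^ 2 + Real.sin θ ^ 2 = (2 * |Real.sin (θ / 2)|) ^ 2 := by
    have hs : Real.sin (θ / 2) ^ 2 = 1 / 2 - Real.cos (2 * (θ / 2)) / 2 :=
      Real.sin_sq_eq_half_sub _
    have h3 : Real.sin θ ^ 2 + Real.cos θ ^ 2 = 1 := Real.sin_sq_add_cos_sq θ
    have h4 : |Real.sin (θ / 2)| ^ 2 = Real.sin (θ / 2) ^ 2 := sq_abs _
    rw [show 2 * (θ / 2) = θ by ring] at hs
    nlinarith
  rw [h2, Real.sqrt_sq (by positivity)]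

lemma geom_bound (x : ℝ) (hx : Real.sin x ≠ 0) (m : ℕ) :
    ‖∑ s ∈ Finset.Icc 1 m, Complex.exp ((2 * x * s : ℝ) * Complex.I)‖ ≤ 1 / |Real.sin x| := by
  set z : ℂ := Complex.exp ((2 * x : ℝ) * Complex.I) with hz
  have hnz : ‖z - 1‖ = 2 * |Real.sin x| := by
    have h := norm_exp_sub_one (2 * x)
    rw [show (2 * x / 2 : ℝ) = x by ring] at h
    exact h
  have hz1 : z ≠ 1 := by
    intro h
    rw [h] at hnz
    simp at hnz
    exact hx hnz
  have hpow : ∀ s : ℕ, Complex.exp ((2 * x * s : ℝ) * Complex.I) = z ^ s := by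
    intro s
    rw [hz, ← Complex.exp_nat_mul]
    congr 1
    push_cast
    ring
  have hsum : ∑ s ∈ Finset.Icc 1 m, Complex.exp ((2 * x * s : ℝ) * Complex.I)
      = (z ^ (m + 1) - z ^ 1) / (z - 1) := by
    rw [← Finset.Ico_add_one_right_eq_Icc, ← geom_sum_Ico hz1 (Nat.le_add_left 1 m)]
    exact Finset.sum_congr rfl fun s _ => hpow s
  rw [hsum]
  rw [norm_div, hnz]
  have hzn : ∀ j : ℕ, ‖z ^ j‖ = 1 := by
    intro j
    rw [norm_pow, hz, Complex.norm_exp_ofReal_mul_I, one_pow]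
  have h1 : ‖z ^ (m + 1) - z ^ 1‖ ≤ 2 := by
    calc ‖z ^ (m + 1) - z ^ 1‖ ≤ ‖z ^ (m + 1)‖ + ‖z ^ 1‖ := norm_sub_le _ _
    _ = 2 := by rw [hzn, hzn]; norm_num
  have hsx : 0 < |Real.sin x| := abs_pos.mpr hx
  rw [div_le_div_iff₀ (by positivity) hsx]
  nlinarith

lemma vdc (φ : ℝ) (hφ : ∀ h : ℕ, 1 ≤ h → Real.sin (2 * φ * h) ≠ 0) (n : ℕ) :
    ‖∑ t ∈ Finset.Icc 1 n, Complex.exp ((2 * φ * (t : ℝ) ^ 2 : ℝ) * Complex.I)‖ ^ 2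
      ≤ n + 2 * ∑ h ∈ Finset.Icc 1 (n - 1), min (n : ℝ) (1 / |Real.sin (2 * φ * (h : ℝ))|) := by
  set c : ℕ → ℂ := fun t => Complex.exp ((2 * φ * (t : ℝ) ^ 2 : ℝ) * Complex.I) with hc
  set f : ℕ → ℕ → ℂ := fun t s =>
    Complex.exp ((2 * φ * ((t : ℝ) ^ 2 - (s : ℝ) ^ 2) : ℝ) * Complex.I) with hf
  have hconj : ∀ t s : ℕ, (starRingEnd ℂ) (f t s) = f s t := by
    intro t s
    rw [hf]
    simp only []
    rw [← Complex.exp_conj]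
    congr 1
    rw [map_mul, Complex.conj_I, Complex.conj_ofReal]
    push_cast
    ring
  have hmul : ∀ t s : ℕ, c t * (starRingEnd ℂ) (c s) = f t s := by
    intro t s
    rw [hc, hf]
    simp only []
    rw [← Complex.exp_conj, ← Complex.exp_add]
    congr 1
    rw [map_mul, Complex.conj_I, Complex.conj_ofReal]
    push_cast
    ring
  -- square of norm as double sum
  have hsq : ‖∑ t ∈ Finset.Icc 1 n, c t‖ ^ 2
      = (∑ t ∈ Finset.Icc 1 n, ∑ s ∈ Finset.Icc 1 n, f t s).re := by
    have h1 : (∑ t ∈ Finset.Icc 1 n, c t) * (starRingEnd ℂ) (∑ t ∈ Finset.Icc 1 n, c t)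
        = ∑ t ∈ Finset.Icc 1 n, ∑ s ∈ Finset.Icc 1 n, f t s := by
      rw [map_sum, Finset.sum_mul_sum]
      exact Finset.sum_congr rfl fun t _ => Finset.sum_congr rfl fun s _ => hmul t s
    rw [← h1, Complex.mul_conj, Complex.sq_norm, Complex.ofReal_re]
  -- split the double sum
  set U : Finset (ℕ × ℕ) := Finset.Icc 1 n ×ˢ Finset.Icc 1 n with hU
  set F : ℕ × ℕ → ℂ := fun p => f p.1 p.2 with hF
  have hdouble : ∑ t ∈ Finset.Icc 1 n, ∑ s ∈ Finset.Icc 1 n, f t s = ∑ p ∈ U, F p := by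
    rw [hU, Finset.sum_product]
  set P : ℂ := ∑ p ∈ U.filter (fun p => p.2 < p.1), F p with hP
  have hsplit : ∑ p ∈ U, F p
      = P + ((starRingEnd ℂ) P + n) := by
    rw [hP, ← Finset.sum_filter_add_sum_filter_not U (fun p => p.2 < p.1) F]
    congr 1
    -- remaining part equals conj P + n
    have e1 : U.filter (fun p => ¬ p.2 < p.1)
        = (U.filter (fun p => p.1 < p.2)) ∪ (U.filter (fun p => p.1 = p.2)) := by
      rw [← Finset.filter_or]
      apply Finset.filter_congr
      intro p _
      constructor
      · intro h
        omega
      · intro h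
        omega
    have hdisj : Disjoint (U.filter (fun p => p.1 < p.2)) (U.filter (fun p => p.1 = p.2)) := by
      apply Finset.disjoint_left.2
      intro p hp1 hp2
      simp only [Finset.mem_filter] at hp1 hp2
      omega
    rw [e1, Finset.sum_union hdisj]
    congr 1
    · -- swap reindex: sum over p.1 < p.2 equals conj P
      rw [map_sum]
      apply Finset.sum_nbij' (fun p => Prod.swap p) (fun p => Prod.swap p)
      · intro p hp
        simp only [Finset.mem_filter, hU, Finset.mem_product] at hp ⊢
        exact ⟨⟨hp.1.2, hp.1.1⟩, hp.2⟩
      · intro p hp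
        simp only [Finset.mem_filter, hU, Finset.mem_product] at hp ⊢
        exact ⟨⟨hp.1.2, hp.1.1⟩, hp.2⟩
      · intro p _; exact Prod.swap_swap p
      · intro p _; exact Prod.swap_swap p
      · intro p _
        rw [hF]
        exact (hconj p.2 p.1).symm
    · -- diagonal sum is n
      have e2 : U.filter (fun p => p.1 = p.2) = (Finset.Icc 1 n).image (fun t => (t, t)) := by
        ext ⟨a, b⟩
        simp only [Finset.mem_filter, hU, Finset.mem_product, Finset.mem_image, Prod.mk.injEq]
        constructor
        · rintro ⟨⟨h1, _⟩, h3⟩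
          exact ⟨a, h1, rfl, h3⟩
        · rintro ⟨t, ht, rfl, rfl⟩
          exact ⟨⟨ht, ht⟩, rfl⟩
      rw [e2, Finset.sum_image (fun a _ b _ h => (Prod.mk.injEq _ _ _ _ ▸ h).1)]
      have e3 : ∀ t ∈ Finset.Icc 1 n, F (t, t) = 1 := by
        intro t _
        rw [hF, hf]
        simp
      rw [Finset.sum_congr rfl e3, Finset.sum_const, Nat.card_Icc]
      simp
  have hre : ‖∑ t ∈ Finset.Icc 1 n, c t‖ ^ 2 = 2 * P.re + n := by
    rw [hsq, hdouble, hsplit]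
    simp only [Complex.add_re, Complex.conj_re, Complex.natCast_re]
    ring
  have hPe : P = ∑ h ∈ Finset.Icc 1 (n - 1), ∑ s ∈ Finset.Icc 1 (n - h), f (s + h) s := by
    rw [hP, ← Finset.sum_sigma (Finset.Icc 1 (n - 1)) (fun h => Finset.Icc 1 (n - h))
      (fun x => f (x.2 + x.1) x.2)]
    apply Finset.sum_nbij' (fun p => (⟨p.1 - p.2, p.2⟩ : Σ _ : ℕ, ℕ))
      (fun x => ((x.2 + x.1, x.2) : ℕ × ℕ))
    · intro p hp
      simp only [Finset.mem_filter, hU, Finset.mem_product, Finset.mem_Icc] at hp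
      simp only [Finset.mem_sigma, Finset.mem_Icc]
      omega
    · intro x hx
      simp only [Finset.mem_sigma, Finset.mem_Icc] at hx
      simp only [Finset.mem_filter, hU, Finset.mem_product, Finset.mem_Icc]
      omega
    · intro p hp
      simp only [Finset.mem_filter, hU, Finset.mem_product, Finset.mem_Icc] at hp
      have : p.2 + (p.1 - p.2) = p.1 := by omega
      simp [this]
    · intro x hx
      simp only [Finset.mem_sigma, Finset.mem_Icc] at hx
      simp [Nat.add_sub_cancel_left]
    · intro p hp
      simp only [Finset.mem_filter, hU, Finset.mem_product, Finset.mem_Icc] at hp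
      have h1 : p.2 + (p.1 - p.2) = p.1 := by omega
      rw [hF]
      simp only []
      rw [h1]
  have hinner : ∀ h ∈ Finset.Icc 1 (n - 1),
      ‖∑ s ∈ Finset.Icc 1 (n - h), f (s + h) s‖
        ≤ min (n : ℝ) (1 / |Real.sin (2 * φ * (h : ℝ))|) := by
    intro h hh
    rw [Finset.mem_Icc] at hh
    have hsin : Real.sin (2 * φ * (h : ℝ)) ≠ 0 := hφ h hh.1
    have hfe : ∀ s : ℕ, f (s + h) s
        = Complex.exp ((2 * φ * (h : ℝ) ^ 2 : ℝ) * Complex.I)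
          * Complex.exp ((2 * (2 * φ * h) * s : ℝ) * Complex.I) := by
      intro s
      rw [hf]
      simp only []
      rw [← Complex.exp_add]
      congr 1
      push_cast
      ring
    rw [Finset.sum_congr rfl (fun s _ => hfe s), ← Finset.mul_sum, norm_mul,
      Complex.norm_exp_ofReal_mul_I, one_mul]
    apply le_min
    · calc ‖∑ s ∈ Finset.Icc 1 (n - h), Complex.exp ((2 * (2 * φ * h) * s : ℝ) * Complex.I)‖
          ≤ ∑ s ∈ Finset.Icc 1 (n - h), ‖Complex.exp ((2 * (2 * φ * h) * s : ℝ) * Complex.I)‖ :=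
            norm_sum_le _ _
      _ = (n - h : ℕ) := by
          rw [Finset.sum_congr rfl (fun s _ => Complex.norm_exp_ofReal_mul_I _),
            Finset.sum_const, Nat.card_Icc, nsmul_eq_mul, mul_one]
          simp
      _ ≤ (n : ℝ) := by
          exact_mod_cast Nat.cast_le.mpr (Nat.sub_le n h)
    · exact geom_bound (2 * φ * h) hsin (n - h)
  have hPbound : ‖P‖ ≤ ∑ h ∈ Finset.Icc 1 (n - 1), min (n : ℝ) (1 / |Real.sin (2 * φ * (h : ℝ))|) := by
    rw [hPe]
    calc ‖∑ h ∈ Finset.Icc 1 (n - 1), ∑ s ∈ Finset.Icc 1 (n - h), f (s + h) s‖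
        ≤ ∑ h ∈ Finset.Icc 1 (n - 1), ‖∑ s ∈ Finset.Icc 1 (n - h), f (s + h) s‖ :=
          norm_sum_le _ _
    _ ≤ _ := Finset.sum_le_sum hinner
  have hreP : P.re ≤ ‖P‖ := by
    exact Complex.re_le_norm P
  rw [hre]
  linarith

lemma count_small (g : ℕ → ℝ) (hg : ∀ d, 1 ≤ d → 0 < g d)
    (hsub : ∀ a b : ℕ, a ≤ b → g (b - a) ≤ g a + g b)
    {η : ℝ} (hη : 0 < η) :
    ∃ ε > 0, ∀ n : ℕ,
      (((Finset.Icc 1 n).filter (fun h => g h < ε)).card : ℝ) ≤ η * n + 1 := by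
  set D : ℕ := ⌈1 / η⌉₊ with hD
  have hD1 : (1 : ℝ) / η ≤ (D : ℝ) + 1 := by
    have h := Nat.le_ceil (1 / η)
    rw [hD]
    push_cast at h ⊢
    linarith
  obtain ⟨ε0, hε0, hmin⟩ : ∃ ε0 > 0, ∀ d ∈ Finset.Icc 1 D, ε0 ≤ g d := by
    rcases (Finset.Icc 1 D).eq_empty_or_nonempty with he | hne
    · exact ⟨1, one_pos, fun d hd => absurd (he ▸ hd) (Finset.notMem_empty d)⟩
    · obtain ⟨d0, hd0, hd0min⟩ := Finset.exists_min_image (Finset.Icc 1 D) g hne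
      exact ⟨g d0, hg d0 (Finset.mem_Icc.1 hd0).1, hd0min⟩
  refine ⟨ε0 / 2, by positivity, fun n => ?_⟩
  set T : Finset ℕ := (Finset.Icc 1 n).filter (fun h => g h < ε0 / 2) with hT
  have hsep : ∀ a ∈ T, ∀ b ∈ T, a < b → D < b - a := by
    intro a ha b hb hab
    by_contra hc
    push_neg at hc
    have h1 : b - a ∈ Finset.Icc 1 D := Finset.mem_Icc.2 ⟨by omega, hc⟩
    have h2 : ε0 ≤ g (b - a) := hmin _ h1
    have h3 : g (b - a) ≤ g a + g b := hsub a b (le_of_lt hab)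
    rw [hT, Finset.mem_filter] at ha hb
    linarith [ha.2, hb.2]
  have hcard : T.card ≤ (n - 1) / (D + 1) + 1 := by
    have := Finset.card_le_card_of_injOn (s := T) (fun h => (h - 1) / (D + 1))
      (t := Finset.range ((n - 1) / (D + 1) + 1)) ?_ ?_
    · simpa using this
    · intro a ha
      rw [hT, Finset.mem_coe, Finset.mem_filter, Finset.mem_Icc] at ha
      rw [Finset.mem_coe, Finset.mem_range, Nat.lt_succ]
      exact Nat.div_le_div_right (by omega)
    · intro a ha b hb hab
      simp only at hab
      rw [Finset.mem_coe] at ha hb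
      have ha1 : 1 ≤ a := (Finset.mem_Icc.1 (Finset.mem_filter.1 ha).1).1
      have hb1 : 1 ≤ b := (Finset.mem_Icc.1 (Finset.mem_filter.1 hb).1).1
      rcases lt_trichotomy a b with h | h | h
      · exfalso
        have hda := hsep a ha b hb h
        have h4 : (a - 1) + (D + 1) ≤ b - 1 := by omega
        have h5 : ((a - 1) + (D + 1)) / (D + 1) ≤ (b - 1) / (D + 1) :=
          Nat.div_le_div_right h4
        rw [Nat.add_div_right _ (Nat.succ_pos D), ← hab] at h5
        exact Nat.not_succ_le_self _ h5
      · exact h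
      · exfalso
        have hda := hsep b hb a ha h
        have h4 : (b - 1) + (D + 1) ≤ a - 1 := by omega
        have h5 : ((b - 1) + (D + 1)) / (D + 1) ≤ (a - 1) / (D + 1) :=
          Nat.div_le_div_right h4
        rw [Nat.add_div_right _ (Nat.succ_pos D), hab] at h5
        exact Nat.not_succ_le_self _ h5
  have hcast : ((((n : ℕ) - 1) / (D + 1) : ℕ) : ℝ) ≤ η * n := by
    calc ((((n : ℕ) - 1) / (D + 1) : ℕ) : ℝ) ≤ ((n - 1 : ℕ) : ℝ) / ((D + 1 : ℕ) : ℝ) :=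
        Nat.cast_div_le
    _ ≤ (n : ℝ) / ((D : ℝ) + 1) := by
        have h2 : ((D + 1 : ℕ) : ℝ) = (D : ℝ) + 1 := by push_cast; ring
        rw [h2]
        gcongr
        exact_mod_cast Nat.sub_le n 1
    _ ≤ η * n := by
        rw [div_le_iff₀ (by positivity)]
        have h6 : 1 ≤ η * ((D : ℝ) + 1) := by
          rw [div_le_iff₀ hη] at hD1
          linarith
        nlinarith [Nat.cast_nonneg (α := ℝ) n]
  calc (T.card : ℝ) ≤ (((n - 1) / (D + 1) + 1 : ℕ) : ℝ) := Nat.cast_le.2 hcard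
  _ = (((n - 1) / (D + 1) : ℕ) : ℝ) + 1 := by push_cast; ring
  _ ≤ η * n + 1 := by linarith

lemma abel_identity (b : ℕ → ℝ) (w : ℕ → ℝ) (n : ℕ) :
    ∑ t ∈ Finset.Icc 1 n, w t * b t
      = w n * (∑ t ∈ Finset.Icc 1 n, b t)
        - ∑ t ∈ Finset.Icc 1 (n - 1), (w (t + 1) - w t) * (∑ j ∈ Finset.Icc 1 t, b j) := by
  induction n with
  | zero => simp
  | succ m ih =>
    rcases Nat.eq_zero_or_pos m with hm | hm
    · subst hm
      simp
    · have hsplit : ∑ t ∈ Finset.Icc 1 (m + 1), w t * b t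
          = (∑ t ∈ Finset.Icc 1 m, w t * b t) + w (m + 1) * b (m + 1) :=
        Finset.sum_Icc_succ_top (by omega) _
      have hA : ∑ t ∈ Finset.Icc 1 (m + 1), b t
          = (∑ t ∈ Finset.Icc 1 m, b t) + b (m + 1) :=
        Finset.sum_Icc_succ_top (by omega) _
      have hm1 : m + 1 - 1 = m := by omega
      have hsplit2 : ∑ t ∈ Finset.Icc 1 m, (w (t + 1) - w t) * (∑ j ∈ Finset.Icc 1 t, b j)
          = (∑ t ∈ Finset.Icc 1 (m - 1), (w (t + 1) - w t) * (∑ j ∈ Finset.Icc 1 t, b j))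
            + (w (m + 1) - w m) * (∑ j ∈ Finset.Icc 1 m, b j) := by
        conv_lhs => rw [show m = (m - 1) + 1 by omega]
        rw [Finset.sum_Icc_succ_top (by omega)]
        rw [show m - 1 + 1 = m by omega]
      rw [hsplit, ih, hA, hm1, hsplit2]
      ring

lemma telescope (k n : ℕ) (hn : 1 ≤ n) :
    ∑ t ∈ Finset.Icc 1 (n - 1), (((t : ℝ) + 1) ^ k - (t : ℝ) ^ k) = (n : ℝ) ^ k - 1 := by
  have h := Finset.sum_range_sub (fun i => ((i : ℝ) + 1) ^ k) (n - 1)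
  rw [← Finset.Ico_add_one_right_eq_Icc, show n - 1 + 1 = n from by omega, Finset.sum_Ico_eq_sum_range]
  have h2 : ∀ i ∈ Finset.range (n - 1),
      ((((1 + i : ℕ) : ℝ) + 1) ^ k - ((1 + i : ℕ) : ℝ) ^ k)
        = ((fun j : ℕ => ((j : ℝ) + 1) ^ k) (i + 1) - (fun j : ℕ => ((j : ℝ) + 1) ^ k) i) := by
    intro i _
    push_cast
    ring
  rw [Finset.sum_congr rfl h2, h]
  have h3 : ((n - 1 : ℕ) : ℝ) = (n : ℝ) - 1 := by
    push_cast [Nat.cast_sub hn]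
    ring
  rw [h3]
  norm_num

lemma weighted_tendsto (b : ℕ → ℝ) (hb : ∀ t, |b t| ≤ 1)
    (h : Tendsto (fun n : ℕ => (∑ t ∈ Finset.Icc 1 n, b t) / n) atTop (nhds 0)) (k : ℕ) :
    Tendsto (fun n : ℕ => (∑ t ∈ Finset.Icc 1 n, (t : ℝ) ^ k * b t) / (n : ℝ) ^ (k + 1))
      atTop (nhds 0) := by
  set A : ℕ → ℝ := fun m => ∑ t ∈ Finset.Icc 1 m, b t with hA
  have hAcrude : ∀ m : ℕ, |A m| ≤ m := by
    intro m
    calc |A m| ≤ ∑ t ∈ Finset.Icc 1 m, |b t| := Finset.abs_sum_le_sum_abs _ _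
    _ ≤ ∑ t ∈ Finset.Icc 1 m, 1 := Finset.sum_le_sum (fun t _ => hb t)
    _ = m := by rw [Finset.sum_const, Nat.card_Icc]; simp
  rw [Metric.tendsto_atTop] at h ⊢
  intro ε hε
  obtain ⟨N₀, hN₀⟩ := h (ε / 8) (by positivity)
  set N : ℕ := max N₀ 1 with hN
  have hN1 : 1 ≤ N := le_max_right _ _
  have hAsmall : ∀ m : ℕ, N ≤ m → |A m| ≤ ε / 8 * m := by
    intro m hm
    have h1 : (1 : ℕ) ≤ m := le_trans hN1 hm
    have hmpos : (0 : ℝ) < m := by exact_mod_cast h1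
    have h2 := hN₀ m (le_trans (le_max_left _ _) hm)
    rw [Real.dist_eq, sub_zero, abs_div, _root_.abs_of_nonneg (le_of_lt hmpos),
      div_lt_iff₀ hmpos] at h2
    linarith
  have hAall : ∀ m : ℕ, |A m| ≤ ε / 8 * m + N := by
    intro m
    rcases le_or_gt N m with hm | hm
    · have h1 := hAsmall m hm
      have h2 : (0 : ℝ) ≤ N := Nat.cast_nonneg N
      linarith
    · have h1 := hAcrude m
      have h2 : (m : ℝ) ≤ N := by exact_mod_cast le_of_lt hm
      have h3 : (0 : ℝ) ≤ ε / 8 * m := by positivity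
      linarith
  obtain ⟨M, hM⟩ := exists_nat_gt (2 * N / ε)
  refine ⟨max N M, fun n hn => ?_⟩
  have hnN : N ≤ n := le_trans (le_max_left _ _) hn
  have hnM : M ≤ n := le_trans (le_max_right _ _) hn
  have hn1 : 1 ≤ n := le_trans hN1 hnN
  have hnpos : (0 : ℝ) < n := by exact_mod_cast hn1
  have habel := abel_identity b (fun t => (t : ℝ) ^ k) n
  simp only at habel
  have hterm : ∀ t ∈ Finset.Icc 1 (n - 1),
      |(((t + 1 : ℕ) : ℝ) ^ k - (t : ℝ) ^ k) * A t|
        ≤ (((t : ℝ) + 1) ^ k - (t : ℝ) ^ k) * (ε / 8 * n + N) := by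
    intro t ht
    rw [Finset.mem_Icc] at ht
    have htn : (t : ℝ) ≤ n := by
      have : t ≤ n := le_trans ht.2 (Nat.sub_le n 1)
      exact_mod_cast this
    have hmono : (t : ℝ) ^ k ≤ ((t : ℝ) + 1) ^ k :=
      pow_le_pow_left₀ (Nat.cast_nonneg t) (by linarith) k
    have hcast : ((t + 1 : ℕ) : ℝ) ^ k = ((t : ℝ) + 1) ^ k := by push_cast; ring
    rw [abs_mul, hcast, _root_.abs_of_nonneg (by linarith : (0 : ℝ) ≤ ((t : ℝ) + 1) ^ k - (t : ℝ) ^ k)]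
    apply mul_le_mul_of_nonneg_left ?_ (by linarith)
    calc |A t| ≤ ε / 8 * t + N := hAall t
    _ ≤ ε / 8 * n + N := by nlinarith
  have hsum : |∑ t ∈ Finset.Icc 1 n, (t : ℝ) ^ k * b t|
      ≤ (n : ℝ) ^ k * (ε / 8 * n) + ((n : ℝ) ^ k - 1) * (ε / 8 * n + N) := by
    rw [habel]
    have h1 : |(n : ℝ) ^ k * A n| ≤ (n : ℝ) ^ k * (ε / 8 * n) := by
      rw [abs_mul, _root_.abs_of_nonneg (by positivity : (0 : ℝ) ≤ (n : ℝ) ^ k)]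
      exact mul_le_mul_of_nonneg_left (hAsmall n hnN) (by positivity)
    have h2 : |∑ t ∈ Finset.Icc 1 (n - 1), (((t + 1 : ℕ) : ℝ) ^ k - (t : ℝ) ^ k) * A t|
        ≤ ((n : ℝ) ^ k - 1) * (ε / 8 * n + N) := by
      calc |∑ t ∈ Finset.Icc 1 (n - 1), (((t + 1 : ℕ) : ℝ) ^ k - (t : ℝ) ^ k) * A t|
          ≤ ∑ t ∈ Finset.Icc 1 (n - 1), |(((t + 1 : ℕ) : ℝ) ^ k - (t : ℝ) ^ k) * A t| :=
            Finset.abs_sum_le_sum_abs _ _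
      _ ≤ ∑ t ∈ Finset.Icc 1 (n - 1), (((t : ℝ) + 1) ^ k - (t : ℝ) ^ k) * (ε / 8 * n + N) :=
            Finset.sum_le_sum hterm
      _ = ((n : ℝ) ^ k - 1) * (ε / 8 * n + N) := by
            rw [← Finset.sum_mul, telescope k n hn1]
    calc |(n : ℝ) ^ k * A n - ∑ t ∈ Finset.Icc 1 (n - 1), (((t + 1 : ℕ) : ℝ) ^ k - (t : ℝ) ^ k) * A t|
        ≤ |(n : ℝ) ^ k * A n| + |∑ t ∈ Finset.Icc 1 (n - 1), (((t + 1 : ℕ) : ℝ) ^ k - (t : ℝ) ^ k) * A t| :=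
          abs_sub _ _
    _ ≤ _ := add_le_add h1 h2
  rw [Real.dist_eq, sub_zero, abs_div, _root_.abs_of_nonneg (by positivity : (0 : ℝ) ≤ (n : ℝ) ^ (k + 1)),
    div_lt_iff₀ (by positivity : (0 : ℝ) < (n : ℝ) ^ (k + 1))]
  have hpow : (n : ℝ) ^ (k + 1) = (n : ℝ) ^ k * n := by ring
  have hNn : (N : ℝ) < ε / 2 * n := by
    have h1 : 2 * (N : ℝ) / ε < M := hM
    have h2 : (M : ℝ) ≤ n := by exact_mod_cast hnM
    rw [div_lt_iff₀ hε] at h1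
    nlinarith
  have hpk : (0 : ℝ) < (n : ℝ) ^ k := by positivity
  have hεn : 0 < ε / 8 * n + N := by positivity
  calc |∑ t ∈ Finset.Icc 1 n, (t : ℝ) ^ k * b t|
      ≤ (n : ℝ) ^ k * (ε / 8 * n) + ((n : ℝ) ^ k - 1) * (ε / 8 * n + N) := hsum
  _ < ε * (n : ℝ) ^ (k + 1) := by
      rw [hpow]
      nlinarith [mul_pos hpk hnpos]

lemma main_o (φ : ℝ) (hφ : ∀ h : ℕ, 1 ≤ h → Real.sin (2 * φ * h) ≠ 0) :
    Tendsto (fun n : ℕ =>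
        ‖∑ t ∈ Finset.Icc 1 n, Complex.exp ((2 * φ * (t : ℝ) ^ 2 : ℝ) * Complex.I)‖ / n)
      atTop (nhds 0) := by
  rw [Metric.tendsto_atTop]
  intro η hη
  set g : ℕ → ℝ := fun h => |Real.sin (2 * φ * h)| with hg
  have hgpos : ∀ d, 1 ≤ d → 0 < g d := fun d hd => abs_pos.2 (hφ d hd)
  have hgsub : ∀ a b : ℕ, a ≤ b → g (b - a) ≤ g a + g b := by
    intro a b hab
    rw [hg]
    simp only
    have hcast : ((b - a : ℕ) : ℝ) = (b : ℝ) - a := by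
      push_cast [Nat.cast_sub hab]
      ring
    rw [hcast, show 2 * φ * ((b : ℝ) - a) = 2 * φ * b - 2 * φ * a by ring, Real.sin_sub]
    calc |Real.sin (2 * φ * b) * Real.cos (2 * φ * a)
          - Real.cos (2 * φ * b) * Real.sin (2 * φ * a)|
        ≤ |Real.sin (2 * φ * b) * Real.cos (2 * φ * a)|
          + |Real.cos (2 * φ * b) * Real.sin (2 * φ * a)| := abs_sub _ _
    _ ≤ |Real.sin (2 * φ * a)| + |Real.sin (2 * φ * b)| := by
        rw [abs_mul, abs_mul]
        have h1 := Real.abs_cos_le_one (2 * φ * (a : ℝ))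
        have h2 := Real.abs_cos_le_one (2 * φ * (b : ℝ))
        have h3 := abs_nonneg (Real.sin (2 * φ * (a : ℝ)))
        have h4 := abs_nonneg (Real.sin (2 * φ * (b : ℝ)))
        nlinarith
  have hη2 : 0 < η ^ 2 / 8 := by positivity
  obtain ⟨ε, hε, hcount⟩ := count_small g hgpos hgsub hη2
  obtain ⟨M, hM⟩ := exists_nat_gt ((3 + 2 / ε) / (η ^ 2 * (3 / 4)))
  refine ⟨max M 1, fun n hn => ?_⟩
  have hn1 : 1 ≤ n := le_trans (le_max_right _ _) hn
  have hnM : M ≤ n := le_trans (le_max_left _ _) hn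
  have hnpos : (0 : ℝ) < n := by exact_mod_cast hn1
  set Sn : ℝ := ‖∑ t ∈ Finset.Icc 1 n, Complex.exp ((2 * φ * (t : ℝ) ^ 2 : ℝ) * Complex.I)‖
    with hSn
  have hvdc := vdc φ hφ n
  -- bound the min-sum
  set T : Finset ℕ := (Finset.Icc 1 (n - 1)).filter (fun h => g h < ε) with hT
  have hsplit := Finset.sum_filter_add_sum_filter_not (Finset.Icc 1 (n - 1))
    (fun h => g h < ε) (fun h => min (n : ℝ) (1 / g h))
  have hTsum : ∑ h ∈ T, min (n : ℝ) (1 / g h) ≤ (T.card : ℝ) * n := by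
    calc ∑ h ∈ T, min (n : ℝ) (1 / g h) ≤ ∑ h ∈ T, (n : ℝ) :=
        Finset.sum_le_sum (fun h _ => min_le_left _ _)
    _ = (T.card : ℝ) * n := by rw [Finset.sum_const, nsmul_eq_mul]
  have hT2sum : ∑ h ∈ (Finset.Icc 1 (n - 1)).filter (fun h => ¬ g h < ε),
      min (n : ℝ) (1 / g h) ≤ (n : ℝ) * (1 / ε) := by
    have hcard : (((Finset.Icc 1 (n - 1)).filter (fun h => ¬ g h < ε)).card : ℝ) ≤ n := by
      have h1 := Finset.card_filter_le (Finset.Icc 1 (n - 1)) (fun h => ¬ g h < ε)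
      have h2 : (Finset.Icc 1 (n - 1)).card ≤ n := by
        rw [Nat.card_Icc]
        omega
      exact_mod_cast le_trans h1 h2
    calc ∑ h ∈ (Finset.Icc 1 (n - 1)).filter (fun h => ¬ g h < ε), min (n : ℝ) (1 / g h)
        ≤ ∑ h ∈ (Finset.Icc 1 (n - 1)).filter (fun h => ¬ g h < ε), (1 / ε) := by
          apply Finset.sum_le_sum
          intro h hh
          rw [Finset.mem_filter] at hh
          push_neg at hh
          calc min (n : ℝ) (1 / g h) ≤ 1 / g h := min_le_right _ _
          _ ≤ 1 / ε := one_div_le_one_div_of_le hε hh.2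
    _ = (((Finset.Icc 1 (n - 1)).filter (fun h => ¬ g h < ε)).card : ℝ) * (1 / ε) := by
          rw [Finset.sum_const, nsmul_eq_mul]
    _ ≤ (n : ℝ) * (1 / ε) := by
          apply mul_le_mul_of_nonneg_right hcard
          positivity
  have hTcard : (T.card : ℝ) ≤ η ^ 2 / 8 * n + 1 := by
    have h1 := hcount (n - 1)
    have h2 : ((n - 1 : ℕ) : ℝ) ≤ n := by
      exact_mod_cast Nat.sub_le n 1
    rw [hT]
    have h3 : (0 : ℝ) ≤ η ^ 2 / 8 := by positivity
    nlinarith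
  have hminsum : ∑ h ∈ Finset.Icc 1 (n - 1), min (n : ℝ) (1 / g h)
      ≤ (η ^ 2 / 8 * n + 1) * n + (n : ℝ) * (1 / ε) := by
    rw [← hsplit]
    have h5 : (0 : ℝ) ≤ n := le_of_lt hnpos
    have := add_le_add hTsum hT2sum
    apply le_trans this
    apply add_le_add_left
    apply mul_le_mul_of_nonneg_right hTcard h5
  have hkey : Sn ^ 2 < η ^ 2 * n ^ 2 := by
    have h6 : (n : ℝ) * (3 + 2 / ε) < η ^ 2 * (3 / 4) * n ^ 2 := by
      have h7 : ((3 + 2 / ε) / (η ^ 2 * (3 / 4))) < M := hM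
      have h8 : (M : ℝ) ≤ n := by exact_mod_cast hnM
      have h9 : (0 : ℝ) < η ^ 2 * (3 / 4) := by positivity
      rw [div_lt_iff₀ h9] at h7
      have h12 : (n : ℝ) * (3 + 2 / ε) < (n : ℝ) * ((M : ℝ) * (η ^ 2 * (3 / 4))) :=
        mul_lt_mul_of_pos_left h7 hnpos
      have h13 : (n : ℝ) * ((M : ℝ) * (η ^ 2 * (3 / 4))) ≤ η ^ 2 * (3 / 4) * (n : ℝ) ^ 2 := by
        nlinarith [mul_le_mul_of_nonneg_left
          (mul_le_mul_of_nonneg_left h8 (le_of_lt hnpos)) h9.le]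
      linarith
    have h10 : (0 : ℝ) < ε := hε
    calc Sn ^ 2 ≤ n + 2 * ∑ h ∈ Finset.Icc 1 (n - 1), min (n : ℝ) (1 / g h) := hvdc
    _ ≤ n + 2 * ((η ^ 2 / 8 * n + 1) * n + (n : ℝ) * (1 / ε)) := by linarith
    _ = η ^ 2 / 4 * n ^ 2 + (n : ℝ) * (3 + 2 / ε) := by field_simp; ring
    _ < η ^ 2 / 4 * n ^ 2 + η ^ 2 * (3 / 4) * n ^ 2 := by linarith
    _ = η ^ 2 * n ^ 2 := by ring
  have hSnpos : 0 ≤ Sn := norm_nonneg _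
  have hfin : Sn < η * n := by
    have h11 : Sn ^ 2 < (η * n) ^ 2 := by nlinarith
    exact lt_of_pow_lt_pow_left₀ 2 (by positivity) h11
  rw [Real.dist_eq, sub_zero, abs_div, _root_.abs_of_nonneg hSnpos,
    _root_.abs_of_nonneg (le_of_lt hnpos), div_lt_iff₀ hnpos]
  linarith

end Stmt5Aux

theorem stmt5 :
    ∃ S : Set ℝ, S.Countable ∧
      ∀ φ ∈ Set.Ioo (0 : ℝ) Real.pi, φ ∉ S → ∀ k : ℕ,
        Tendsto (fun n : ℕ => (1 / (n : ℝ) ^ (k + 1)) *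
            ∑ t ∈ Finset.Icc 1 n,
              (t : ℝ) ^ k * (Real.sin (φ * (t : ℝ) ^ 2) * Real.cos (φ * (t : ℝ) ^ 2)))
          atTop (nhds 0) := by
  refine ⟨Set.range (fun q : ℚ => (q : ℝ) * Real.pi), Set.countable_range _, ?_⟩
  intro φ _ hφS k
  have hφirr : ∀ h : ℕ, 1 ≤ h → Real.sin (2 * φ * h) ≠ 0 := by
    intro h hh hsin
    obtain ⟨m, hm⟩ := Real.sin_eq_zero_iff.1 hsin
    apply hφS
    refine ⟨(m : ℚ) / (2 * h), ?_⟩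
    have hh0 : (h : ℝ) ≠ 0 := by
      have : (0 : ℝ) < h := by exact_mod_cast hh
      linarith
    push_cast
    field_simp
    linarith [hm]
  set b : ℕ → ℝ := fun t => Real.sin (2 * φ * (t : ℝ) ^ 2) with hb
  have hb1 : ∀ t, |b t| ≤ 1 := fun t =>
    abs_le.2 ⟨Real.neg_one_le_sin _, Real.sin_le_one _⟩
  have hAle : ∀ n : ℕ, |∑ t ∈ Finset.Icc 1 n, b t|
      ≤ ‖∑ t ∈ Finset.Icc 1 n, Complex.exp ((2 * φ * (t : ℝ) ^ 2 : ℝ) * Complex.I)‖ := by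
    intro n
    have him : ∑ t ∈ Finset.Icc 1 n, b t
        = (∑ t ∈ Finset.Icc 1 n, Complex.exp ((2 * φ * (t : ℝ) ^ 2 : ℝ) * Complex.I)).im := by
      rw [Complex.im_sum]
      exact Finset.sum_congr rfl fun t _ => (Complex.exp_ofReal_mul_I_im _).symm
    rw [him]
    exact Complex.abs_im_le_norm _
  have hA : Tendsto (fun n : ℕ => (∑ t ∈ Finset.Icc 1 n, b t) / n) atTop (nhds 0) := by
    apply squeeze_zero_norm (fun n => ?_) (Stmt5Aux.main_o φ hφirr)
    rw [Real.norm_eq_abs, abs_div, _root_.abs_of_nonneg (Nat.cast_nonneg n : (0:ℝ) ≤ n)]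
    rcases Nat.eq_zero_or_pos n with h0 | hpos
    · subst h0
      simp
    · have : (0 : ℝ) < n := by exact_mod_cast hpos
      exact (div_le_div_iff_of_pos_right this).2 (hAle n)
  have hW := Stmt5Aux.weighted_tendsto b hb1 hA k
  have hfun : (fun n : ℕ => (1 / (n : ℝ) ^ (k + 1)) *
      ∑ t ∈ Finset.Icc 1 n,
        (t : ℝ) ^ k * (Real.sin (φ * (t : ℝ) ^ 2) * Real.cos (φ * (t : ℝ) ^ 2)))
      = fun n : ℕ => (1 / 2) * ((∑ t ∈ Finset.Icc 1 n, (t : ℝ) ^ k * b t) / (n : ℝ) ^ (k + 1)) := by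
    funext n
    have hterm : ∀ t : ℕ, Real.sin (φ * (t : ℝ) ^ 2) * Real.cos (φ * (t : ℝ) ^ 2) = b t / 2 := by
      intro t
      rw [hb]
      simp only
      rw [show 2 * φ * (t : ℝ) ^ 2 = 2 * (φ * (t : ℝ) ^ 2) by ring, Real.sin_two_mul]
      ring
    rw [Finset.sum_congr rfl (fun t _ => by rw [hterm t])]
    have h2 : ∑ t ∈ Finset.Icc 1 n, (t : ℝ) ^ k * (b t / 2)
        = (∑ t ∈ Finset.Icc 1 n, (t : ℝ) ^ k * b t) / 2 := by
      rw [Finset.sum_div]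
      exact Finset.sum_congr rfl fun t _ => by ring
    rw [h2]
    ring
  rw [hfun]
  have h3 := hW.const_mul (1 / 2 : ℝ)
  simpa using h3
end
end

section
/- Let A⁰, B⁰ be real numbers with (A⁰)² + (B⁰)² > 0 and α⁰ ∈ (0, π). Define f₁(A, B, α) as the limit (when it exists) of (1/n) Σ_{t=1}^n (A⁰ cos(α⁰ t) + B⁰ sin(α⁰ t) − A cos(α t) − B sin(α t))². Then for all but countably many α ∈ (0,π): if α = α⁰ then f₁ = ((A⁰−A)² + (B⁰−B)²)/2, and if α ≠ α⁰ then f₁ = ((A⁰)² + (B⁰)² + A² + B²)/2. Consequently, for any c > 0, inf over the set {(A,B,α) : |A−A⁰| ≥ c or |B−B⁰| ≥ c} of f₁ is strictly positive. -/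
open Filter Finset

private def Ces (f : ℕ → ℝ) (L : ℝ) : Prop :=
  Tendsto (fun n : ℕ => (1 / (n : ℝ)) * ∑ t ∈ Finset.Icc 1 n, f t) atTop (nhds L)

private lemma ces_congr {f g : ℕ → ℝ} {L : ℝ} (h : ∀ t, f t = g t) (hf : Ces f L) : Ces g L :=
  (funext h : f = g) ▸ hf

private lemma ces_of_eq {f : ℕ → ℝ} {L M : ℝ} (hf : Ces f L) (h : L = M) : Ces f M := h ▸ hf

private lemma ces_add {f g : ℕ → ℝ} {L M : ℝ} (hf : Ces f L) (hg : Ces g M) :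
    Ces (fun t => f t + g t) (L + M) := by
  refine (Tendsto.add hf hg).congr fun n => ?_
  rw [Finset.sum_add_distrib]; ring

private lemma ces_smul {f : ℕ → ℝ} {L : ℝ} (hf : Ces f L) (a : ℝ) :
    Ces (fun t => a * f t) (a * L) := by
  refine (hf.const_mul a).congr fun n => ?_
  rw [← Finset.mul_sum]; ring

private lemma ces_const (c : ℝ) : Ces (fun _ => c) c := by
  have h : ∀ᶠ n : ℕ in atTop, c = (1 / (n : ℝ)) * ∑ _t ∈ Finset.Icc 1 n, c := by
    filter_upwards [eventually_ge_atTop 1] with n hn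
    have hn' : (n : ℝ) ≠ 0 := by positivity
    rw [Finset.sum_const, Nat.card_Icc, nsmul_eq_mul]
    push_cast
    field_simp
  exact Tendsto.congr' h tendsto_const_nhds

private lemma ces_of_bdd {f : ℕ → ℝ} (C : ℝ) (h : ∀ n, |∑ t ∈ Finset.Icc 1 n, f t| ≤ C) :
    Ces f 0 := by
  apply squeeze_zero_norm' (a := fun n : ℕ => C / n)
  · filter_upwards [eventually_ge_atTop 1] with n hn
    have hn' : (0:ℝ) < n := by positivity
    rw [Real.norm_eq_abs, abs_mul, abs_of_nonneg (by positivity : (0:ℝ) ≤ 1/(n:ℝ))]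
    calc 1/(n:ℝ) * |∑ t ∈ Finset.Icc 1 n, f t| ≤ 1/(n:ℝ) * C := by
          apply mul_le_mul_of_nonneg_left (h n) (by positivity)
      _ = C / n := by ring
  · exact tendsto_const_div_atTop_nhds_zero_nat C

private lemma exp_ne_one' {θ : ℝ} (h0 : θ ≠ 0) (h2 : |θ| < 2 * Real.pi) :
    Complex.exp (θ * Complex.I) ≠ 1 := by
  simp only [Ne, Complex.exp_eq_one_iff]
  push_neg
  intro n hn
  have h' : (θ : ℂ) * Complex.I = ((n : ℂ) * (2 * Real.pi)) * Complex.I := by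
    rw [hn]; ring
  have hθ : (θ : ℂ) = (n : ℂ) * (2 * Real.pi) := mul_right_cancel₀ Complex.I_ne_zero h'
  have hθ' : θ = (n : ℝ) * (2 * Real.pi) := by exact_mod_cast hθ
  rcases eq_or_ne n 0 with rfl | hn0
  · simp at hθ'; exact h0 hθ'
  · have h1 : (1:ℝ) ≤ |(n:ℝ)| := by
      rw [← Int.cast_abs]; exact_mod_cast Int.one_le_abs hn0
    have : 2 * Real.pi ≤ |θ| := by
      rw [hθ', abs_mul, abs_of_pos (by positivity : (0:ℝ) < 2 * Real.pi)]
      nlinarith [Real.pi_pos]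
    linarith

private lemma ces_cos_sin (θ : ℝ) (h : Complex.exp (θ * Complex.I) ≠ 1) :
    Ces (fun t : ℕ => Real.cos (θ * t)) 0 ∧ Ces (fun t : ℕ => Real.sin (θ * t)) 0 := by
  set z := Complex.exp (θ * Complex.I) with hzdef
  have hz1 : ‖z‖ = 1 := Complex.norm_exp_ofReal_mul_I θ
  have hsum : ∀ n : ℕ, ∑ t ∈ Finset.Icc 1 n, z ^ t = z * ∑ t ∈ Finset.range n, z ^ t := by
    intro n; induction n with
    | zero => simp
    | succ n ih =>
        rw [Finset.sum_Icc_succ_top (by omega), ih, Finset.sum_range_succ]; ring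
  have hb : ∀ n : ℕ, ‖∑ t ∈ Finset.Icc 1 n, z ^ t‖ ≤ 2 / ‖z - 1‖ := by
    intro n
    rw [hsum, geom_sum_eq h, norm_mul, hz1, one_mul, norm_div]
    have hd : (0:ℝ) < ‖z - 1‖ := norm_pos_iff.2 (sub_ne_zero.2 h)
    gcongr
    calc ‖z ^ n - 1‖ ≤ ‖z ^ n‖ + ‖(1:ℂ)‖ := norm_sub_le _ _
      _ = 2 := by rw [norm_pow, hz1]; norm_num
  have hpow : ∀ t : ℕ, z ^ t = Complex.exp ((θ * t : ℝ) * Complex.I) := by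
    intro t
    rw [hzdef, ← Complex.exp_nat_mul]
    congr 1
    push_cast; ring
  constructor
  · apply ces_of_bdd (2 / ‖z - 1‖)
    intro n
    have : ∑ t ∈ Finset.Icc 1 n, Real.cos (θ * t) = (∑ t ∈ Finset.Icc 1 n, z ^ t).re := by
      rw [Complex.re_sum]
      exact Finset.sum_congr rfl fun t _ => by
        rw [hpow t, Complex.exp_ofReal_mul_I_re]
    rw [this]
    exact (Complex.abs_re_le_norm _).trans (hb n)
  · apply ces_of_bdd (2 / ‖z - 1‖)
    intro n
    have : ∑ t ∈ Finset.Icc 1 n, Real.sin (θ * t) = (∑ t ∈ Finset.Icc 1 n, z ^ t).im := by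
      rw [Complex.im_sum]
      exact Finset.sum_congr rfl fun t _ => by
        rw [hpow t, Complex.exp_ofReal_mul_I_im]
    rw [this]
    exact (Complex.abs_im_le_norm _).trans (hb n)

theorem stmt12 (A0 B0 : ℝ) (hAB : A0 ^ 2 + B0 ^ 2 > 0)
    (α0 : ℝ) (hα0 : α0 ∈ Set.Ioo (0 : ℝ) Real.pi) :
    ∃ S : Set ℝ, S.Countable ∧
      (∀ α ∈ Set.Ioo (0 : ℝ) Real.pi, α ∉ S → ∀ A B : ℝ,
        (α = α0 →
          Tendsto (fun n : ℕ => (1 / (n : ℝ)) * ∑ t ∈ Finset.Icc 1 n,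
              (A0 * Real.cos (α0 * t) + B0 * Real.sin (α0 * t)
                - A * Real.cos (α * t) - B * Real.sin (α * t)) ^ 2)
            atTop (nhds (((A0 - A) ^ 2 + (B0 - B) ^ 2) / 2))) ∧
        (α ≠ α0 →
          Tendsto (fun n : ℕ => (1 / (n : ℝ)) * ∑ t ∈ Finset.Icc 1 n,
              (A0 * Real.cos (α0 * t) + B0 * Real.sin (α0 * t)
                - A * Real.cos (α * t) - B * Real.sin (α * t)) ^ 2)
            atTop (nhds ((A0 ^ 2 + B0 ^ 2 + A ^ 2 + B ^ 2) / 2)))) ∧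
      (∀ c > (0 : ℝ), ∃ δ > (0 : ℝ), ∀ α ∈ Set.Ioo (0 : ℝ) Real.pi, α ∉ S → ∀ A B : ℝ,
        (c ≤ |A - A0| ∨ c ≤ |B - B0|) → ∀ L : ℝ,
        Tendsto (fun n : ℕ => (1 / (n : ℝ)) * ∑ t ∈ Finset.Icc 1 n,
            (A0 * Real.cos (α0 * t) + B0 * Real.sin (α0 * t)
              - A * Real.cos (α * t) - B * Real.sin (α * t)) ^ 2)
          atTop (nhds L) → δ ≤ L) := by
  obtain ⟨hα0l, hα0r⟩ := hα0
  have hπ := Real.pi_pos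
  have main : ∀ α ∈ Set.Ioo (0 : ℝ) Real.pi, ∀ A B : ℝ,
      (α = α0 →
        Tendsto (fun n : ℕ => (1 / (n : ℝ)) * ∑ t ∈ Finset.Icc 1 n,
            (A0 * Real.cos (α0 * t) + B0 * Real.sin (α0 * t)
              - A * Real.cos (α * t) - B * Real.sin (α * t)) ^ 2)
          atTop (nhds (((A0 - A) ^ 2 + (B0 - B) ^ 2) / 2))) ∧
      (α ≠ α0 →
        Tendsto (fun n : ℕ => (1 / (n : ℝ)) * ∑ t ∈ Finset.Icc 1 n,
            (A0 * Real.cos (α0 * t) + B0 * Real.sin (α0 * t)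
              - A * Real.cos (α * t) - B * Real.sin (α * t)) ^ 2)
          atTop (nhds ((A0 ^ 2 + B0 ^ 2 + A ^ 2 + B ^ 2) / 2))) := by
    rintro α ⟨hαl, hαr⟩ A B
    constructor
    · rintro rfl
      have hcs := ces_cos_sin (2 * α)
        (exp_ne_one' (by positivity) (by rw [abs_of_pos (by positivity)]; linarith))
      have base := ces_add (ces_const (((A0 - A) ^ 2 + (B0 - B) ^ 2) / 2))
        (ces_add (ces_smul hcs.1 (((A0 - A) ^ 2 - (B0 - B) ^ 2) / 2))
          (ces_smul hcs.2 ((A0 - A) * (B0 - B))))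
      refine ces_congr (fun t => ?_) (ces_of_eq base ?_)
      swap
      · norm_num
      have ht : (2 * α) * (t : ℝ) = 2 * (α * t) := by ring
      rw [ht, Real.cos_two_mul, Real.sin_two_mul]
      have hp := Real.sin_sq_add_cos_sq (α * t)
      nlinarith [hp]
    · intro hne
      have h1 := ces_cos_sin (2 * α0)
        (exp_ne_one' (by positivity) (by rw [abs_of_pos (by positivity)]; linarith))
      have h2 := ces_cos_sin (2 * α)
        (exp_ne_one' (by positivity) (by rw [abs_of_pos (by positivity)]; linarith))
      have h3 := ces_cos_sin (α0 - α)
        (exp_ne_one' (sub_ne_zero.2 (fun hh => hne hh.symm))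
          (by rw [abs_lt]; constructor <;> linarith))
      have h4 := ces_cos_sin (α0 + α)
        (exp_ne_one' (by positivity) (by rw [abs_of_pos (by positivity)]; linarith))
      have base := ces_add (ces_const ((A0 ^ 2 + B0 ^ 2 + A ^ 2 + B ^ 2) / 2))
        (ces_add (ces_smul h1.1 ((A0 ^ 2 - B0 ^ 2) / 2))
          (ces_add (ces_smul h1.2 (A0 * B0))
            (ces_add (ces_smul h2.1 ((A ^ 2 - B ^ 2) / 2))
              (ces_add (ces_smul h2.2 (A * B))
                (ces_add (ces_smul h3.1 (-(A0 * A + B0 * B)))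
                  (ces_add (ces_smul h3.2 (A0 * B - B0 * A))
                    (ces_add (ces_smul h4.1 (B0 * B - A0 * A))
                      (ces_smul h4.2 (-(A0 * B + B0 * A))))))))))
      refine ces_congr (fun t => ?_) (ces_of_eq base ?_)
      swap
      · norm_num
      have e1 : (2 * α0) * (t : ℝ) = 2 * (α0 * t) := by ring
      have e2 : (2 * α) * (t : ℝ) = 2 * (α * t) := by ring
      have e3 : (α0 - α) * (t : ℝ) = α0 * t - α * t := by ring
      have e4 : (α0 + α) * (t : ℝ) = α0 * t + α * t := by ring
      rw [e1, e2, e3, e4]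
      simp only [Real.cos_two_mul, Real.sin_two_mul, Real.cos_sub, Real.sin_sub,
        Real.cos_add, Real.sin_add]
      have hp0 := Real.sin_sq_add_cos_sq (α0 * t)
      have hp := Real.sin_sq_add_cos_sq (α * t)
      nlinarith [hp0, hp]
  refine ⟨∅, Set.countable_empty, fun α hα _ A B => main α hα A B, ?_⟩
  intro c hc
  refine ⟨min (c ^ 2 / 2) ((A0 ^ 2 + B0 ^ 2) / 2),
    lt_min (by positivity) (by linarith), ?_⟩
  rintro α hα - A B habs L hL
  rcases eq_or_ne α α0 with h | h
  · have hlim := (main α hα A B).1 h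
    have hLeq : L = ((A0 - A) ^ 2 + (B0 - B) ^ 2) / 2 := tendsto_nhds_unique hL hlim
    have hc2 : c ^ 2 / 2 ≤ L := by
      rcases habs with hA | hB
      · have : c ^ 2 ≤ (A - A0) ^ 2 := by
          calc c ^ 2 ≤ |A - A0| ^ 2 := by
                apply pow_le_pow_left₀ hc.le hA
            _ = (A - A0) ^ 2 := sq_abs _
        rw [hLeq]; nlinarith [sq_nonneg (B0 - B)]
      · have : c ^ 2 ≤ (B - B0) ^ 2 := by
          calc c ^ 2 ≤ |B - B0| ^ 2 := by
                apply pow_le_pow_left₀ hc.le hB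
            _ = (B - B0) ^ 2 := sq_abs _
        rw [hLeq]; nlinarith [sq_nonneg (A0 - A)]
    exact le_trans (min_le_left _ _) hc2
  · have hlim := (main α hα A B).2 h
    have hLeq : L = (A0 ^ 2 + B0 ^ 2 + A ^ 2 + B ^ 2) / 2 := tendsto_nhds_unique hL hlim
    have : (A0 ^ 2 + B0 ^ 2) / 2 ≤ L := by
      rw [hLeq]; nlinarith [sq_nonneg A, sq_nonneg B]
    exact le_trans (min_le_right _ _) this
end
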